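/- arXiv:math/0202203 — 5 statements merged into one kernel-verified Lean document; each statement's English description precedes it below -/
import Mathlib

section
/- Let ρ > 1. For every ε > 0 there exists M > 0 such that every point z = re^{iφ} with r ≥ M, 0 < φ < π/(2ρ), lying on the generalized Szegő curve (i.e. satisfying r^ρ cos(ρφ) − 1 − ρ log r = 0) is at distance less than ε from the ray {te^{iπ/(2ρ)} : t ≥ 0}; in other words, the branch of the curve S(ρ) ∩ {|z| ≥ 1} in the upper half plane has the ray arg z = π/(2ρ) as an asymptote (and by symmetry, the lower branch has asymptote arg z = −π/(2ρ)). -/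
open Complex Real Filter Topology

lemma exp_I_dist (x y : ℝ) :
    ‖Complex.exp (Complex.I * (x : ℂ)) - Complex.exp (Complex.I * (y : ℂ))‖ ≤ |x - y| := by
  have hsq : ‖Complex.exp (Complex.I * (x : ℂ)) - Complex.exp (Complex.I * (y : ℂ))‖ ^ 2
      ≤ |x - y| ^ 2 := by
    rw [Complex.sq_norm, Complex.normSq_apply]
    simp only [Complex.sub_re, Complex.sub_im, mul_comm Complex.I,
      Complex.exp_ofReal_mul_I_re, Complex.exp_ofReal_mul_I_im]
    have h1 : 1 - (x - y) ^ 2 / 2 ≤ Real.cos (x - y) := Real.one_sub_sq_div_two_le_cos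
    have h2 : Real.cos (x - y) = Real.cos x * Real.cos y + Real.sin x * Real.sin y := Real.cos_sub x y
    have h3 : Real.sin x ^ 2 + Real.cos x ^ 2 = 1 := Real.sin_sq_add_cos_sq x
    have h4 : Real.sin y ^ 2 + Real.cos y ^ 2 = 1 := Real.sin_sq_add_cos_sq y
    have h5 : |x - y| ^ 2 = (x - y) ^ 2 := sq_abs _
    nlinarith
  have h := Real.sqrt_le_sqrt hsq
  rwa [Real.sqrt_sq (norm_nonneg _), Real.sqrt_sq (abs_nonneg _)] at h

theorem stmt11 (ρ : ℝ) (hρ : 1 < ρ) (ε : ℝ) (hε : 0 < ε) :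
    ∃ M : ℝ, 0 < M ∧ ∀ r φ : ℝ, M ≤ r → 0 < φ → φ < π / (2 * ρ) →
      r ^ ρ * Real.cos (ρ * φ) - 1 - ρ * Real.log r = 0 →
      ∃ t : ℝ, 0 ≤ t ∧
        ‖(r : ℂ) * Complex.exp (Complex.I * (φ : ℂ)) -
          (t : ℂ) * Complex.exp (Complex.I * ((π / (2 * ρ) : ℝ) : ℂ))‖ < ε := by
  have hρ0 : (0:ℝ) < ρ := by linarith
  have hc : (0:ℝ) < ρ - 1 := by linarith
  -- the limit
  have h1 : Tendsto (fun x : ℝ => Real.log x / x ^ (ρ - 1)) atTop (𝓝 0) :=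
    (isLittleO_log_rpow_atTop hc).tendsto_div_nhds_zero
  have h2 : Tendsto (fun x : ℝ => x ^ (-(ρ - 1))) atTop (𝓝 0) :=
    tendsto_rpow_neg_atTop hc
  have h3 : Tendsto (fun x : ℝ =>
      π / (2 * ρ) * (x ^ (-(ρ - 1)) + ρ * (Real.log x / x ^ (ρ - 1)))) atTop
      (𝓝 (π / (2 * ρ) * (0 + ρ * 0))) :=
    (h2.add (h1.const_mul ρ)).const_mul _
  rw [show π / (2 * ρ) * (0 + ρ * 0) = 0 by ring] at h3
  have h4 : Tendsto (fun x : ℝ =>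
      π / (2 * ρ) * ((1 + ρ * Real.log x) / x ^ (ρ - 1))) atTop (𝓝 0) := by
    refine h3.congr' ?_
    filter_upwards [eventually_gt_atTop (0:ℝ)] with x hx
    have hQ : (0:ℝ) < x ^ (ρ - 1) := Real.rpow_pos_of_pos hx _
    rw [Real.rpow_neg hx.le]
    field_simp
  have hev : ∀ᶠ x : ℝ in atTop,
      π / (2 * ρ) * ((1 + ρ * Real.log x) / x ^ (ρ - 1)) < ε :=
    h4.eventually (gt_mem_nhds hε)
  obtain ⟨M₀, hM₀⟩ := (hev.and (eventually_ge_atTop (1:ℝ))).exists_forall_of_atTop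
  refine ⟨max M₀ 1, lt_of_lt_of_le one_pos (le_max_right _ _), ?_⟩
  intro r φ hr hφ0 hφψ heq
  obtain ⟨hlt, hr1⟩ := hM₀ r (le_trans (le_max_left _ _) hr)
  have hr0 : (0:ℝ) < r := lt_of_lt_of_le one_pos hr1
  set ψ : ℝ := π / (2 * ρ) with hψdef
  set δ : ℝ := ψ - φ with hδdef
  have hδ0 : 0 < δ := by simp [hδdef]; linarith
  set A : ℝ := 1 + ρ * Real.log r with hA
  set Q : ℝ := r ^ (ρ - 1) with hQ
  have hQ0 : (0:ℝ) < Q := Real.rpow_pos_of_pos hr0 _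
  have hP : r ^ ρ = Q * r := by
    rw [hQ, ← Real.rpow_add_one hr0.ne' (ρ - 1)]
    norm_num
  -- the curve equation gives cos (ρ φ) explicitly
  have hcos : (r ^ ρ) * Real.cos (ρ * φ) = A := by rw [hA]; linarith
  -- Jordan's inequality
  have hρφ : ρ * φ < π / 2 := by
    nlinarith [mul_lt_mul_of_pos_left hφψ hρ0,
      (by field_simp : ρ * (π / (2 * ρ)) = π / 2)]
  have hδψ : ρ * δ = π / 2 - ρ * φ := by
    rw [hδdef, hψdef]; field_simp
  have hjordan : 2 / π * (ρ * δ) ≤ Real.sin (ρ * δ) := by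
    apply Real.mul_le_sin (by positivity)
    rw [hδψ]; linarith [mul_pos hρ0 hφ0]
  have hsin : Real.sin (ρ * δ) = Real.cos (ρ * φ) := by
    rw [hδψ, Real.sin_pi_div_two_sub]
  rw [hsin] at hjordan
  -- turn into polynomial inequality
  have hcos' : Real.cos (ρ * φ) = A / (Q * r) := by
    rw [← hP]; field_simp [(Real.rpow_pos_of_pos hr0 ρ).ne']; linarith [hcos]
  rw [hcos', div_mul_eq_mul_div] at hjordan
  have hJ2 : 2 * (ρ * δ) * (Q * r) ≤ A * π :=
    (div_le_div_iff₀ Real.pi_pos (by positivity)).mp hjordan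
  -- distance estimate
  refine ⟨r, hr0.le, ?_⟩
  have key : r * δ ≤ π / (2 * ρ) * (A / Q) := by
    rw [← mul_div_assoc, le_div_iff₀ hQ0, div_mul_eq_mul_div, le_div_iff₀ (by positivity : (0:ℝ) < 2 * ρ)]
    nlinarith [hJ2]
  calc ‖(r : ℂ) * Complex.exp (Complex.I * (φ : ℂ)) -
          (r : ℂ) * Complex.exp (Complex.I * ((ψ : ℝ) : ℂ))‖
      = r * ‖Complex.exp (Complex.I * (φ : ℂ)) - Complex.exp (Complex.I * ((ψ : ℝ) : ℂ))‖ := by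
        rw [← mul_sub, norm_mul, Complex.norm_real, Real.norm_eq_abs, abs_of_pos hr0]
    _ ≤ r * |φ - ψ| := by
        have := exp_I_dist φ ψ
        exact mul_le_mul_of_nonneg_left this hr0.le
    _ = r * δ := by rw [abs_sub_comm, abs_of_pos hδ0]
    _ ≤ π / (2 * ρ) * (A / Q) := key
    _ < ε := hlt
end

section
/- Let ρ > 1, δ₂ > 0, δ₃ > 0, h > 0, and define J₁'(n,z) = e^{R_n^ρ z^ρ}·Γ(1+n/ρ)/(R_n^n z^n). Then there exist a constant C₁ > 0 and N such that for all n ≥ N and all z in Ω₁ ∪ Ω₅, where Ω₁ = {z = re^{iφ} : 0 < r ≤ 1, |z−1| ≥ δ₂, |φ| ≤ π/(2ρ) − δ₃, r^ρ cos(ρφ) − 1 − ρ log r ≥ 0} and Ω₅ = {z = re^{iφ} : r ≥ 1, |φ| ≤ π/(2ρ) − δ₃, r^ρ cos(ρφ) − 1 − ρ log r ≥ h}, one has |J₁'(n,z)| ≥ C₁ (n/ρ)^{1/2}. -/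
open Complex Real Filter Topology

/-- `R_n = Γ(1+n/ρ)/Γ(1+(n-1)/ρ)`. -/
noncomputable def Rn (ρ : ℝ) (n : ℕ) : ℝ :=
  Real.Gamma (1 + (n : ℝ) / ρ) / Real.Gamma (1 + ((n : ℝ) - 1) / ρ)


/-- `J₁·(n,z) = e^{R_n^ρ z^ρ}·Γ(1+n/ρ)/(R_n^n z^n)`. -/
noncomputable def J1 (ρ : ℝ) (n : ℕ) (z : ℂ) : ℂ :=
  Complex.exp (((Rn ρ n ^ ρ : ℝ) : ℂ) * z ^ (ρ : ℂ)) * (Real.Gamma (1 + (n : ℝ) / ρ) : ℂ) /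
    ((Rn ρ n : ℂ) ^ n * z ^ n)


lemma my_gamma_upper {x s : ℝ} (hx : 0 < x) (hs0 : 0 ≤ s) (hs1 : s ≤ 1) :
    Real.Gamma (x + s) ≤ Real.Gamma x * x ^ s := by
  have h1 : (0:ℝ) < x + 1 := by linarith
  have key := Real.convexOn_log_Gamma.2 (Set.mem_Ioi.2 hx) (Set.mem_Ioi.2 h1)
      (by linarith : (0:ℝ) ≤ 1 - s) hs0 (by ring)
  simp only [smul_eq_mul, Function.comp_apply] at key
  have hpt : (1 - s) * x + s * (x + 1) = x + s := by ring
  rw [hpt] at key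
  have hGx : 0 < Real.Gamma x := Real.Gamma_pos_of_pos hx
  have hGxs : 0 < Real.Gamma (x + s) := Real.Gamma_pos_of_pos (by linarith)
  rw [Real.Gamma_add_one hx.ne', Real.log_mul hx.ne' hGx.ne'] at key
  have key2 : Real.log (Real.Gamma (x + s)) ≤ Real.log (Real.Gamma x) + s * Real.log x := by
    nlinarith [key]
  calc Real.Gamma (x + s) = Real.exp (Real.log (Real.Gamma (x+s))) := (Real.exp_log hGxs).symm
    _ ≤ Real.exp (Real.log (Real.Gamma x) + s * Real.log x) := Real.exp_le_exp.2 key2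
    _ = Real.Gamma x * x ^ s := by
        rw [Real.exp_add, Real.exp_log hGx, Real.rpow_def_of_pos hx, mul_comm s]

lemma my_gamma_lower {x s : ℝ} (hx : 0 < x) (hs0 : 0 ≤ s) (hs1 : s ≤ 1) (hxs : 0 < x + s - 1) :
    Real.Gamma x * (x + s - 1) ^ s ≤ Real.Gamma (x + s) := by
  have hxs' : (0:ℝ) < x + s := by linarith
  have key := Real.convexOn_log_Gamma.2 (Set.mem_Ioi.2 hxs) (Set.mem_Ioi.2 hxs')
      hs0 (by linarith : (0:ℝ) ≤ 1 - s) (by ring)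
  simp only [smul_eq_mul, Function.comp_apply] at key
  have hpt : s * (x + s - 1) + (1 - s) * (x + s) = x := by ring
  rw [hpt] at key
  have hGx : 0 < Real.Gamma x := Real.Gamma_pos_of_pos hx
  have hG1 : 0 < Real.Gamma (x + s - 1) := Real.Gamma_pos_of_pos hxs
  have hG2 : 0 < Real.Gamma (x + s) := Real.Gamma_pos_of_pos hxs'
  have hrec : Real.Gamma (x + s) = (x + s - 1) * Real.Gamma (x + s - 1) := by
    have := Real.Gamma_add_one hxs.ne'
    rw [show x + s - 1 + 1 = x + s by ring] at this
    exact this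
  rw [show Real.Gamma (x+s-1) = Real.Gamma (x+s) / (x+s-1) by
        rw [hrec]; field_simp, Real.log_div hG2.ne' hxs.ne'] at key
  have key2 : Real.log (Real.Gamma x) + s * Real.log (x + s - 1) ≤ Real.log (Real.Gamma (x + s)) := by
    nlinarith [key]
  calc Real.Gamma x * (x + s - 1) ^ s
      = Real.exp (Real.log (Real.Gamma x) + s * Real.log (x + s - 1)) := by
        rw [Real.exp_add, Real.exp_log hGx, Real.rpow_def_of_pos hxs, mul_comm s]
    _ ≤ Real.exp (Real.log (Real.Gamma (x + s))) := Real.exp_le_exp.2 key2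
    _ = Real.Gamma (x + s) := Real.exp_log hG2


lemma stirlingSeq_ge (k : ℕ) : Real.sqrt π ≤ Stirling.stirlingSeq (k + 1) := by
  have h1 : Tendsto (Stirling.stirlingSeq ∘ Nat.succ) atTop (𝓝 (Real.sqrt π)) :=
    Stirling.tendsto_stirlingSeq_sqrt_pi.comp (tendsto_add_atTop_nat 1)
  exact Stirling.stirlingSeq'_antitone.le_of_tendsto h1 k

lemma fact_lower {k : ℕ} (hk : 1 ≤ k) :
    Real.sqrt k * ((k:ℝ) / Real.exp 1) ^ k ≤ ((Nat.factorial k : ℕ) : ℝ) := by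
  obtain ⟨j, rfl⟩ := Nat.exists_eq_add_of_le hk
  have h := stirlingSeq_ge j
  rw [show 1 + j = j + 1 by ring] at *
  have hkpos : (0:ℝ) < (j + 1 : ℕ) := by positivity
  have hden : (0:ℝ) < Real.sqrt (2 * (j+1:ℕ)) * (((j+1:ℕ):ℝ) / Real.exp 1) ^ (j+1) := by
    positivity
  rw [Stirling.stirlingSeq, le_div_iff₀ hden] at h
  calc Real.sqrt (j+1:ℕ) * (((j+1:ℕ):ℝ) / Real.exp 1) ^ (j+1)
      ≤ Real.sqrt π * (Real.sqrt (2 * (j+1:ℕ)) * (((j+1:ℕ):ℝ) / Real.exp 1) ^ (j+1)) := by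
        have h2 : Real.sqrt (j+1:ℕ) ≤ Real.sqrt π * Real.sqrt (2 * (j+1:ℕ)) := by
          rw [← Real.sqrt_mul pi_pos.le]
          apply Real.sqrt_le_sqrt
          nlinarith [pi_gt_three, hkpos]
        have h3 : (0:ℝ) ≤ (((j+1:ℕ):ℝ) / Real.exp 1) ^ (j+1) := by positivity
        nlinarith [h2, h3]
    _ ≤ ((Nat.factorial (j+1) : ℕ) : ℝ) := by rw [mul_comm (Real.sqrt π)] at h; linarith [h]

lemma gammaStirling {m : ℝ} (hm : 2 ≤ m) :
    Real.sqrt m * m ^ m ≤ 2 * Real.exp m * Real.Gamma (1 + m) := by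
  have hm0 : (0:ℝ) < m := by linarith
  set k := ⌊m⌋₊ with hkdef
  have hk1 : (k:ℝ) ≤ m := Nat.floor_le hm0.le
  have hk2 : m < k + 1 := Nat.lt_floor_add_one m
  have hk3 : 2 ≤ k := Nat.le_floor hm
  have hkpos : (0:ℝ) < k := by exact_mod_cast Nat.lt_of_lt_of_le two_pos hk3
  set θ := m - k with hθdef
  have hθ0 : 0 ≤ θ := by simp [hθdef]; linarith
  have hθ1 : θ ≤ 1 := by simp [hθdef]; linarith
  -- Gamma (1+m) ≥ k! * m^θ
  have hGam : ((Nat.factorial k : ℕ) : ℝ) * m ^ θ ≤ Real.Gamma (1 + m) := by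
    have := my_gamma_lower (x := (k:ℝ) + 1) (s := θ) (by positivity) hθ0 hθ1
      (by simp only [hθdef]; linarith)
    rw [show (k:ℝ) + 1 + θ - 1 = m by simp only [hθdef]; ring, show (k:ℝ) + 1 + θ = 1 + m by
      simp only [hθdef]; ring, Real.Gamma_nat_eq_factorial] at this
    exact this
  have hfact : Real.sqrt k * ((k:ℝ) / Real.exp 1) ^ k ≤ ((Nat.factorial k : ℕ) : ℝ) :=
    fact_lower (le_trans one_le_two hk3)
  -- key exponential estimate : m^k ≤ exp (m - k) * k^k
  have hkey : m ^ (k:ℝ) ≤ Real.exp (m - k) * (k:ℝ) ^ (k:ℝ) := by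
    have hlog : Real.log (m / k) ≤ m / k - 1 := Real.log_le_sub_one_of_pos (by positivity)
    have hlog2 : (k:ℝ) * Real.log (m / k) ≤ m - k := by
      have := mul_le_mul_of_nonneg_left hlog hkpos.le
      calc (k:ℝ) * Real.log (m/k) ≤ (k:ℝ) * (m/k - 1) := this
        _ = m - k := by field_simp
    rw [Real.rpow_def_of_pos hm0, Real.rpow_def_of_pos hkpos, ← Real.exp_add]
    apply Real.exp_le_exp.2
    rw [Real.log_div hm0.ne' hkpos.ne'] at hlog2
    nlinarith [hlog2]
  -- m^m = m^k * m^θ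
  have hsplit : m ^ m = m ^ (k:ℝ) * m ^ θ := by
    rw [← Real.rpow_add hm0]; congr 1; simp [hθdef]
  -- sqrt k ≥ sqrt m / 2
  have hsq : Real.sqrt m ≤ 2 * Real.sqrt k := by
    calc Real.sqrt m ≤ Real.sqrt (4 * k) := Real.sqrt_le_sqrt (by push_cast; nlinarith)
      _ = 2 * Real.sqrt k := by
          rw [show (4:ℝ) * k = 2^2 * k by ring, Real.sqrt_mul (by positivity), Real.sqrt_sq two_pos.le]
  -- assemble
  have hek : ((k:ℝ) / Real.exp 1) ^ k = (k:ℝ) ^ (k:ℝ) / Real.exp k := by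
    rw [div_pow, ← Real.rpow_natCast ((k:ℝ)) k, ← Real.rpow_natCast (Real.exp 1) k,
      Real.exp_one_rpow]
  have hmθ : (0:ℝ) < m ^ θ := Real.rpow_pos_of_pos hm0 θ
  have step1 : Real.sqrt m * m ^ m ≤ 2 * Real.sqrt k * (Real.exp (m - k) * (k:ℝ)^(k:ℝ)) * m ^ θ := by
    rw [hsplit]
    have h1 : Real.sqrt m * (m ^ (k:ℝ) * m ^ θ) ≤ (2 * Real.sqrt k) * (m ^ (k:ℝ) * m ^ θ) := by
      apply mul_le_mul_of_nonneg_right hsq (by positivity)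
    refine h1.trans ?_
    have h2 : m ^ (k:ℝ) * m ^ θ ≤ (Real.exp (m - k) * (k:ℝ)^(k:ℝ)) * m ^ θ :=
      mul_le_mul_of_nonneg_right hkey hmθ.le
    calc (2 * Real.sqrt k) * (m ^ (k:ℝ) * m ^ θ)
        ≤ (2 * Real.sqrt k) * ((Real.exp (m - k) * (k:ℝ)^(k:ℝ)) * m ^ θ) := by
          apply mul_le_mul_of_nonneg_left h2 (by positivity)
      _ = 2 * Real.sqrt k * (Real.exp (m - k) * (k:ℝ)^(k:ℝ)) * m ^ θ := by ring
  refine step1.trans ?_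
  have step2 : 2 * Real.sqrt k * (Real.exp (m - k) * (k:ℝ)^(k:ℝ)) * m ^ θ
      = 2 * Real.exp m * ((Real.sqrt k * ((k:ℝ)/Real.exp 1)^k) * m ^ θ) := by
    rw [hek, Real.exp_sub]
    field_simp
  rw [step2]
  have : (Real.sqrt k * ((k:ℝ)/Real.exp 1)^k) * m ^ θ ≤ ((Nat.factorial k : ℕ) : ℝ) * m ^ θ :=
    mul_le_mul_of_nonneg_right hfact hmθ.le
  have h4 : (0:ℝ) < 2 * Real.exp m := by positivity
  calc 2 * Real.exp m * ((Real.sqrt k * ((k:ℝ)/Real.exp 1)^k) * m ^ θ)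
      ≤ 2 * Real.exp m * (((Nat.factorial k : ℕ) : ℝ) * m ^ θ) := mul_le_mul_of_nonneg_left this h4.le
    _ ≤ 2 * Real.exp m * Real.Gamma (1 + m) := mul_le_mul_of_nonneg_left hGam h4.le

set_option maxHeartbeats 1000000 in
theorem stmt12 (ρ : ℝ) (hρ : 1 < ρ) (δ₂ δ₃ h : ℝ) (hδ₂ : 0 < δ₂) (hδ₃ : 0 < δ₃) (hh : 0 < h) :
    ∃ C₁ : ℝ, 0 < C₁ ∧ ∃ N : ℕ, ∀ n ≥ N, ∀ z : ℂ,
      ((0 < ‖z‖ ∧ ‖z‖ ≤ 1 ∧ δ₂ ≤ ‖z - 1‖ ∧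
          |z.arg| ≤ π / (2 * ρ) - δ₃ ∧
          0 ≤ ‖z‖ ^ ρ * Real.cos (ρ * z.arg) - 1 - ρ * Real.log ‖z‖) ∨
       (1 ≤ ‖z‖ ∧ |z.arg| ≤ π / (2 * ρ) - δ₃ ∧
          h ≤ ‖z‖ ^ ρ * Real.cos (ρ * z.arg) - 1 - ρ * Real.log ‖z‖)) →
      C₁ * Real.sqrt ((n : ℝ) / ρ) ≤ ‖J1 ρ n z‖ := by
  have hρ0 : (0:ℝ) < ρ := lt_trans one_pos hρ
  refine ⟨(2 * Real.exp 1)⁻¹, by positivity, ⌈2 * ρ⌉₊, ?_⟩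
  intro n hn z hz
  have hnρ : 2 * ρ ≤ (n : ℝ) := le_trans (Nat.le_ceil _) (by exact_mod_cast hn)
  have hn1 : (1:ℝ) ≤ (n:ℝ) := by linarith
  set r := ‖z‖ with hrdef
  set φ := z.arg with hφdef
  set m := (n:ℝ) / ρ with hmdef
  have hm2 : 2 ≤ m := by rw [hmdef, le_div_iff₀ hρ0]; linarith
  have hm0 : (0:ℝ) < m := by linarith
  have hρm : ρ * m = (n:ℝ) := by rw [hmdef]; field_simp
  -- facts about r and φ
  have hr0 : 0 < r := by
    rcases hz with ⟨h1,_⟩|⟨h1,_⟩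
    · exact h1
    · linarith
  have hz0 : z ≠ 0 := by
    intro hcon
    rw [hrdef, hcon] at hr0
    simp at hr0
  have hφb : |φ| ≤ π / (2*ρ) - δ₃ := by
    rcases hz with ⟨_,_,_,h4,_⟩|⟨_,h4,_⟩ <;> exact h4
  have hc0 : 0 ≤ Real.cos (ρ * φ) := by
    apply Real.cos_nonneg_of_mem_Icc
    have e1 : ρ * (π/(2*ρ)) = π/2 := by field_simp
    obtain ⟨hφ1, hφ2⟩ := abs_le.1 hφb
    constructor
    · have := mul_le_mul_of_nonneg_left hφ1 hρ0.le
      have h2 : 0 < ρ * δ₃ := by positivity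
      nlinarith [this]
    · have := mul_le_mul_of_nonneg_left hφ2 hρ0.le
      have h2 : 0 < ρ * δ₃ := by positivity
      nlinarith [this]
  have hrc : 0 ≤ r ^ ρ * Real.cos (ρ * φ) :=
    mul_nonneg (Real.rpow_nonneg hr0.le ρ) hc0
  have hg : 1 ≤ r ^ ρ * Real.cos (ρ * φ) - ρ * Real.log r := by
    rcases hz with ⟨_,_,_,_,h5⟩|⟨_,_,h5⟩ <;> linarith
  have hcase : r ≤ 1 ∨ 1 ≤ r := by
    rcases hz with ⟨_,h1,_⟩|⟨h1,_⟩
    · exact Or.inl h1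
    · exact Or.inr h1
  -- facts about Rn and Gamma
  have ha0 : (0:ℝ) < 1 + ((n:ℝ) - 1)/ρ := by
    have : (0:ℝ) ≤ ((n:ℝ)-1)/ρ := div_nonneg (by linarith) hρ0.le
    linarith
  have hGa : 0 < Real.Gamma (1 + ((n:ℝ)-1)/ρ) := Real.Gamma_pos_of_pos ha0
  have hG : 0 < Real.Gamma (1 + (n:ℝ)/ρ) := by
    apply Real.Gamma_pos_of_pos
    have : (0:ℝ) ≤ (n:ℝ)/ρ := div_nonneg (by linarith) hρ0.le
    linarith
  have hR : 0 < Rn ρ n := div_pos hG hGa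
  set x := Rn ρ n ^ ρ with hxdef
  have hx0 : 0 < x := Real.rpow_pos_of_pos hR ρ
  have hs0 : (0:ℝ) ≤ 1/ρ := by positivity
  have hs1 : 1/ρ ≤ 1 := by rw [div_le_one hρ0]; linarith
  have hsum1 : 1 + ((n:ℝ)-1)/ρ + 1/ρ = 1 + (n:ℝ)/ρ := by field_simp; ring
  -- lower bound on Rn
  have hxm : m ≤ x := by
    have hlow := my_gamma_lower ha0 hs0 hs1
      (by rw [show 1 + ((n:ℝ)-1)/ρ + 1/ρ - 1 = m by rw [hmdef]; field_simp; ring]; exact hm0)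
    rw [show 1 + ((n:ℝ)-1)/ρ + 1/ρ - 1 = m by rw [hmdef]; field_simp; ring, hsum1] at hlow
    have hRlow : m ^ (1/ρ) ≤ Rn ρ n := by
      rw [Rn, le_div_iff₀ hGa]
      linarith [hlow]
    have h2 := Real.rpow_le_rpow (Real.rpow_nonneg hm0.le (1/ρ)) hRlow hρ0.le
    rw [hxdef]
    rwa [← Real.rpow_mul hm0.le, one_div, inv_mul_cancel₀ hρ0.ne', Real.rpow_one] at h2
  have hxup : x ≤ 1 + ((n:ℝ)-1)/ρ := by
    have hup := my_gamma_upper ha0 hs0 hs1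
    rw [hsum1] at hup
    have hRup : Rn ρ n ≤ (1 + ((n:ℝ)-1)/ρ) ^ (1/ρ) := by
      rw [Rn, div_le_iff₀ hGa]
      linarith [hup]
    have := Real.rpow_le_rpow hR.le hRup hρ0.le
    rwa [← Real.rpow_mul ha0.le, one_div, inv_mul_cancel₀ hρ0.ne', Real.rpow_one] at this
  -- rewrite |J1|
  have hRn_eq : (Rn ρ n) ^ n = x ^ m := by
    rw [hxdef, ← Real.rpow_natCast (Rn ρ n) n, ← hρm, Real.rpow_mul hR.le]
  have hrn_eq : r ^ n = Real.exp ((n:ℝ) * Real.log r) := by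
    rw [← Real.rpow_natCast r n, Real.rpow_def_of_pos hr0, mul_comm]
  have hre : (((x:ℝ):ℂ) * z ^ (ρ:ℂ)).re = x * (r ^ ρ * Real.cos (ρ * φ)) := by
    rw [Complex.cpow_def_of_ne_zero hz0]
    simp only [Complex.mul_re, Complex.ofReal_re, Complex.ofReal_im, Complex.exp_re,
      Complex.exp_im, Complex.log_re, Complex.log_im, Complex.mul_im, zero_mul, mul_zero,
      sub_zero, zero_add]
    simp only [← hrdef, ← hφdef]
    rw [show Real.exp (Real.log r * ρ) = r ^ ρ from (Real.rpow_def_of_pos hr0 ρ).symm,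
      mul_comm φ ρ]
  have habs : ‖J1 ρ n z‖ =
      Real.exp (x * (r ^ ρ * Real.cos (ρ * φ)) - (n:ℝ) * Real.log r) *
        Real.Gamma (1 + (n:ℝ)/ρ) / x ^ m := by
    rw [J1, norm_div, norm_mul, norm_mul, Complex.norm_exp, Complex.norm_real, norm_pow, norm_pow,
      Complex.norm_real, Real.norm_eq_abs, Real.norm_eq_abs, abs_of_pos hG, abs_of_pos hR, hre]
    rw [show ‖z‖ = r from rfl, hRn_eq, hrn_eq, Real.exp_sub]
    rw [div_mul_eq_mul_div, div_div]
    ring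
  rw [habs, ← hmdef]
  rw [le_div_iff₀ (Real.rpow_pos_of_pos hx0 m)]
  -- lower bound on the exponent
  have hρx : ρ * m ≤ ρ * x := mul_le_mul_of_nonneg_left hxm hρ0.le
  have hA1 : 0 ≤ ρ * x - n := by linarith [hρx, hρm]
  have hA2 : ρ * x - n ≤ ρ - 1 := by
    have h1 := mul_le_mul_of_nonneg_left hxup hρ0.le
    have e : ρ * (1 + ((n:ℝ)-1)/ρ) = ρ + (n:ℝ) - 1 := by field_simp; ring
    rw [e] at h1
    linarith
  have hf : x - 1 ≤ x * (r ^ ρ * Real.cos (ρ * φ)) - (n:ℝ) * Real.log r := by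
    rcases hcase with hr1 | hr1
    · have hL0 : Real.log r ≤ 0 := Real.log_nonpos hr0.le hr1
      have p1 : (0:ℝ) ≤ (ρ*x - (ρ-1)) * (r ^ ρ * Real.cos (ρ * φ) - ρ * Real.log r - 1) :=
        mul_nonneg (by linarith [hρx, hρm]) (by linarith)
      have p2 : (0:ℝ) ≤ (ρ-1) * (r ^ ρ * Real.cos (ρ * φ)) :=
        mul_nonneg (by linarith) hrc
      have p3 : (0:ℝ) ≤ ρ * ((ρ - 1 - (ρ*x - n)) * (-Real.log r)) :=
        mul_nonneg hρ0.le (mul_nonneg (by linarith) (by linarith))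
      nlinarith [p1, p2, p3]
    · have hL0 : 0 ≤ Real.log r := Real.log_nonneg hr1
      have p1 : (0:ℝ) ≤ x * (r ^ ρ * Real.cos (ρ * φ) - ρ * Real.log r - 1) :=
        mul_nonneg hx0.le (by linarith)
      have p2 : (0:ℝ) ≤ (ρ*x - n) * Real.log r := mul_nonneg hA1 hL0
      nlinarith [p1, p2]
  have hkey : x ^ m ≤ Real.exp (x - m) * m ^ m := by
    have hlog : Real.log (x / m) ≤ x / m - 1 := Real.log_le_sub_one_of_pos (by positivity)
    have hlog2 : m * (Real.log x - Real.log m) ≤ x - m := by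
      rw [← Real.log_div hx0.ne' hm0.ne']
      have := mul_le_mul_of_nonneg_left hlog hm0.le
      calc m * Real.log (x/m) ≤ m * (x/m - 1) := this
        _ = x - m := by field_simp
    rw [Real.rpow_def_of_pos hx0, Real.rpow_def_of_pos hm0, ← Real.exp_add]
    apply Real.exp_le_exp.2
    nlinarith [hlog2]
  have hgs := gammaStirling hm2
  calc (2 * Real.exp 1)⁻¹ * Real.sqrt m * x ^ m
      ≤ (2 * Real.exp 1)⁻¹ * Real.sqrt m * (Real.exp (x - m) * m ^ m) := by
        apply mul_le_mul_of_nonneg_left hkey (by positivity)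
    _ = Real.exp (x - m) * (Real.sqrt m * m ^ m) * (2 * Real.exp 1)⁻¹ := by ring
    _ ≤ Real.exp (x - m) * (2 * Real.exp m * Real.Gamma (1 + m)) * (2 * Real.exp 1)⁻¹ := by
        apply mul_le_mul_of_nonneg_right (mul_le_mul_of_nonneg_left hgs (Real.exp_pos _).le)
        positivity
    _ = Real.exp (x - 1) * Real.Gamma (1 + m) := by
        rw [show Real.exp (x - m) = Real.exp x / Real.exp m from Real.exp_sub x m,
          show Real.exp (x - 1) = Real.exp x / Real.exp 1 from Real.exp_sub x 1]
        field_simp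
    _ ≤ Real.exp (x * (r ^ ρ * Real.cos (ρ * φ)) - (n:ℝ) * Real.log r) * Real.Gamma (1 + m) := by
        apply mul_le_mul_of_nonneg_right (Real.exp_le_exp.2 hf) hG.le
end

section
/- Let ρ > 1, δ₃ > 0, h > 0, and define J₁'(n,z) = e^{R_n^ρ z^ρ}·Γ(1+n/ρ)/(R_n^n z^n). Then sup over z ∈ Ω₂ of |J₁'(n,z)| tends to 0 as n → ∞, where Ω₂ = {z = re^{iφ} : r > 0, |φ| ≤ π/(2ρ) − δ₃, r^ρ cos(ρφ) − 1 − ρ log r ≤ −h}. -/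
open Complex Real Filter Topology

lemma log_sub_log_le {a b : ℝ} (ha : 0 < a) (hab : a ≤ b) :
    Real.log b - Real.log a ≤ (b - a) / a := by
  have hb : 0 < b := ha.trans_le hab
  have := Real.log_le_sub_one_of_pos (show 0 < b / a by positivity)
  rw [Real.log_div hb.ne' ha.ne'] at this
  have h2 : b / a - 1 = (b - a) / a := by field_simp
  linarith [h2 ▸ this]

lemma le_log_sub_log {a b : ℝ} (ha : 0 < a) (hab : a ≤ b) :
    (b - a) / b ≤ Real.log b - Real.log a := by
  have hb : 0 < b := ha.trans_le hab
  have := Real.log_le_sub_one_of_pos (show 0 < a / b by positivity)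
  rw [Real.log_div ha.ne' hb.ne'] at this
  have h2 : a / b - 1 = -((b - a)/b) := by field_simp; ring
  linarith [this, h2 ▸ this]

-- convexity bounds: for x > 0, 0 < s < 1:
lemma logGamma_add_le {x s : ℝ} (hx : 0 < x) (hs : 0 < s) (hs1 : s < 1) :
    Real.log (Real.Gamma (x + s)) ≤ Real.log (Real.Gamma x) + s * Real.log x := by
  have key := Real.convexOn_log_Gamma.2 (Set.mem_Ioi.mpr hx)
    (Set.mem_Ioi.mpr (by linarith : (0:ℝ) < x + 1)) (by linarith : (0:ℝ) ≤ 1 - s)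
    (le_of_lt hs) (by ring)
  simp only [smul_eq_mul, Function.comp_apply] at key
  have hxs : (1 - s) * x + s * (x + 1) = x + s := by ring
  rw [hxs] at key
  have hG : Real.Gamma (x + 1) = x * Real.Gamma x := Real.Gamma_add_one hx.ne'
  have hGpos : 0 < Real.Gamma x := Real.Gamma_pos_of_pos hx
  rw [hG, Real.log_mul hx.ne' hGpos.ne'] at key
  nlinarith [key]

lemma logGamma_add_ge {x s : ℝ} (hx : 0 < x) (hs : 0 < s) (hs1 : s < 1) :
    Real.log (Real.Gamma x) + Real.log x ≤
      Real.log (Real.Gamma (x + s)) + (1 - s) * Real.log (x + s) := by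
  have key := Real.convexOn_log_Gamma.2 (Set.mem_Ioi.mpr (by linarith : (0:ℝ) < x + s))
    (Set.mem_Ioi.mpr (by linarith : (0:ℝ) < x + s + 1)) (le_of_lt hs)
    (by linarith : (0:ℝ) ≤ 1 - s) (by ring)
  simp only [smul_eq_mul, Function.comp_apply] at key
  have hxs : s * (x + s) + (1 - s) * (x + s + 1) = x + 1 := by ring
  rw [hxs] at key
  have hG : Real.Gamma (x + 1) = x * Real.Gamma x := Real.Gamma_add_one hx.ne'
  have hG2 : Real.Gamma (x + s + 1) = (x + s) * Real.Gamma (x + s) :=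
    Real.Gamma_add_one (by positivity)
  have hGpos : 0 < Real.Gamma x := Real.Gamma_pos_of_pos hx
  have hGpos2 : 0 < Real.Gamma (x + s) := Real.Gamma_pos_of_pos (by positivity)
  rw [hG, Real.log_mul hx.ne' hGpos.ne', hG2,
    Real.log_mul (by positivity) hGpos2.ne'] at key
  nlinarith [key]

/-- x_n -/
noncomputable def Xn (ρ : ℝ) (n : ℕ) : ℝ := 1 + ((n : ℝ) - 1) / ρ

section
variable {ρ : ℝ} (hρ : 1 < ρ)
include hρ

lemma Xn_pos {n : ℕ} (hn : 1 ≤ n) : (1:ℝ) ≤ Xn ρ n := by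
  have hρ0 : (0:ℝ) < ρ := by linarith
  have h1 : (1:ℝ) ≤ (n:ℝ) := by exact_mod_cast hn
  have : 0 ≤ ((n:ℝ) - 1) / ρ := div_nonneg (by linarith) hρ0.le
  unfold Xn; linarith

lemma Rn_pos {n : ℕ} (hn : 1 ≤ n) : 0 < Rn ρ n := by
  have hρ0 : (0:ℝ) < ρ := by linarith
  have h1 : (1:ℝ) ≤ (n:ℝ) := by exact_mod_cast hn
  have h2 : (0:ℝ) < 1 + (n:ℝ)/ρ := by positivity
  have h3 : (0:ℝ) < 1 + ((n:ℝ)-1)/ρ := by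
    have : 0 ≤ ((n:ℝ) - 1) / ρ := div_nonneg (by linarith) hρ0.le
    linarith
  exact div_pos (Real.Gamma_pos_of_pos h2) (Real.Gamma_pos_of_pos h3)

lemma log_Rn_eq {n : ℕ} (hn : 1 ≤ n) :
    Real.log (Rn ρ n) = Real.log (Real.Gamma (Xn ρ n + 1/ρ)) - Real.log (Real.Gamma (Xn ρ n)) := by
  have hρ0 : (0:ℝ) < ρ := by linarith
  have h1 : (1:ℝ) ≤ (n:ℝ) := by exact_mod_cast hn
  have h3 : (0:ℝ) < 1 + ((n:ℝ)-1)/ρ := by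
    have : 0 ≤ ((n:ℝ) - 1) / ρ := div_nonneg (by linarith) hρ0.le
    linarith
  have he : (1:ℝ) + (n:ℝ)/ρ = Xn ρ n + 1/ρ := by unfold Xn; field_simp; ring
  rw [Rn, Real.log_div (Real.Gamma_pos_of_pos (by positivity)).ne'
    (Real.Gamma_pos_of_pos h3).ne', he]
  rfl

lemma log_Rn_le {n : ℕ} (hn : 1 ≤ n) :
    ρ * Real.log (Rn ρ n) ≤ Real.log (Xn ρ n) := by
  have hρ0 : (0:ℝ) < ρ := by linarith
  have hs : 0 < 1/ρ := by positivity
  have hs1 : 1/ρ < 1 := by rw [div_lt_one hρ0]; linarith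
  have h3 : (0:ℝ) < Xn ρ n := lt_of_lt_of_le one_pos (Xn_pos hρ hn)
  have h := logGamma_add_le (x := Xn ρ n) h3 hs hs1
  have h2 : Real.log (Rn ρ n) ≤ (1/ρ) * Real.log (Xn ρ n) := by
    rw [log_Rn_eq hρ hn]; linarith
  have h4 := mul_le_mul_of_nonneg_left h2 hρ0.le
  have hid : ρ * ((1/ρ) * Real.log (Xn ρ n)) = Real.log (Xn ρ n) := by
    field_simp
  linarith [hid ▸ h4]

lemma log_Rn_ge {n : ℕ} (hn : 1 ≤ n) :
    ρ * Real.log (Xn ρ n) - (ρ - 1) * Real.log (Xn ρ n + 1/ρ) ≤ ρ * Real.log (Rn ρ n) := by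
  have hρ0 : (0:ℝ) < ρ := by linarith
  have hs : 0 < 1/ρ := by positivity
  have hs1 : 1/ρ < 1 := by rw [div_lt_one hρ0]; linarith
  have h3 : (0:ℝ) < Xn ρ n := lt_of_lt_of_le one_pos (Xn_pos hρ hn)
  have h := logGamma_add_ge (x := Xn ρ n) h3 hs hs1
  have h2 : Real.log (Xn ρ n) - (1 - 1/ρ) * Real.log (Xn ρ n + 1/ρ) ≤ Real.log (Rn ρ n) := by
    rw [log_Rn_eq hρ hn]; linarith
  have h4 := mul_le_mul_of_nonneg_left h2 hρ0.le
  have hid : ρ * (Real.log (Xn ρ n) - (1 - 1/ρ) * Real.log (Xn ρ n + 1/ρ)) =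
      ρ * Real.log (Xn ρ n) - (ρ - 1) * Real.log (Xn ρ n + 1/ρ) := by
    field_simp
  linarith [hid ▸ h4]

lemma Xn_id (n : ℕ) : ρ * Xn ρ n = ρ + (n:ℝ) - 1 := by
  have hρ0 : (0:ℝ) < ρ := by linarith
  unfold Xn; field_simp; ring

/-- telescoping -/
lemma logGamma_telescope (n : ℕ) :
    Real.log (Real.Gamma (1 + (n:ℝ)/ρ)) = ∑ k ∈ Finset.range n, Real.log (Rn ρ (k+1)) := by
  have hρ0 : (0:ℝ) < ρ := by linarith
  induction n with
  | zero => simp [Real.Gamma_one]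
  | succ m ih =>
    rw [Finset.sum_range_succ, ← ih, Rn]
    have h1 : (0:ℝ) < 1 + ((m:ℝ)+1)/ρ := by positivity
    have h2 : (0:ℝ) < 1 + (m:ℝ)/ρ := by positivity
    have he : ((m+1 : ℕ):ℝ) = (m:ℝ) + 1 := by push_cast; ring
    rw [he]
    have he2 : (m:ℝ) + 1 - 1 = (m:ℝ) := by ring
    rw [he2, Real.log_div (Real.Gamma_pos_of_pos h1).ne' (Real.Gamma_pos_of_pos h2).ne']
    ring

/-- Lemma D : discrete sum bound, by induction -/
lemma sum_log_Xn (n : ℕ) (hn : 1 ≤ n) :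
    ((n:ℝ) - 1) - ρ * Real.log (Xn ρ n) ≤
      (n:ℝ) * Real.log (Xn ρ n) - ∑ k ∈ Finset.range n, Real.log (Xn ρ (k+1)) := by
  have hρ0 : (0:ℝ) < ρ := by linarith
  induction n with
  | zero => omega
  | succ m ih =>
    rcases Nat.eq_or_lt_of_le hn with h1 | h1
    · -- m+1 = 1, i.e. m = 0
      have hm : m = 0 := by omega
      subst hm
      simp [Xn, Real.log_one]
    · have hm : 1 ≤ m := by omega
      have IH := ih hm
      have hXm : (1:ℝ) ≤ Xn ρ m := Xn_pos hρ hm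
      have hXm1 : (1:ℝ) ≤ Xn ρ (m+1) := Xn_pos hρ (by omega)
      have hmono : Xn ρ m ≤ Xn ρ (m+1) := by
        unfold Xn; push_cast
        have h0 : ((m:ℝ)-1)/ρ ≤ ((m:ℝ)+1-1)/ρ :=
          div_le_div_of_nonneg_right (by linarith) hρ0.le
        linarith
      have hgap : 1 / (ρ + (m:ℝ)) ≤ Real.log (Xn ρ (m+1)) - Real.log (Xn ρ m) := by
        have := le_log_sub_log (lt_of_lt_of_le one_pos hXm) hmono
        have he : (Xn ρ (m+1) - Xn ρ m) / Xn ρ (m+1) = 1 / (ρ + (m:ℝ)) := by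
          unfold Xn; push_cast; field_simp; try ring
          rw [← add_mul, mul_inv_cancel₀ (add_pos_of_pos_of_nonneg hρ0 (Nat.cast_nonneg m)).ne']
        linarith [he ▸ this]
      rw [Finset.sum_range_succ]
      push_cast
      have hlogmono : Real.log (Xn ρ m) ≤ Real.log (Xn ρ (m+1)) :=
        Real.log_le_log (lt_of_lt_of_le one_pos hXm) hmono
      have hρm : (0:ℝ) < ρ + m := by positivity
      have hgap2 : 1 ≤ (Real.log (Xn ρ (m+1)) - Real.log (Xn ρ m)) * (ρ + (m:ℝ)) :=
        (div_le_iff₀ hρm).mp hgap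
      nlinarith [hgap2, IH, hlogmono]

lemma delta_bounds {n : ℕ} (hn : 1 ≤ n) :
    0 ≤ Real.log (Xn ρ n + 1/ρ) - Real.log (Xn ρ n) ∧
    (Real.log (Xn ρ n + 1/ρ) - Real.log (Xn ρ n)) * (ρ * Xn ρ n) ≤ 1 := by
  have hρ0 : (0:ℝ) < ρ := by linarith
  have hx : (1:ℝ) ≤ Xn ρ n := Xn_pos hρ hn
  have hx0 : (0:ℝ) < Xn ρ n := by linarith
  have hsρ : (0:ℝ) < 1/ρ := by positivity
  have hle : Xn ρ n ≤ Xn ρ n + 1/ρ := by linarith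
  constructor
  · have := Real.log_le_log hx0 hle
    linarith
  · have h1 := log_sub_log_le hx0 hle
    have h2 : (Xn ρ n + 1/ρ - Xn ρ n) / Xn ρ n = 1 / (ρ * Xn ρ n) := by
      field_simp; ring
    rw [h2] at h1
    have h3 := mul_le_mul_of_nonneg_right h1 (by positivity : (0:ℝ) ≤ ρ * Xn ρ n)
    have h4 : 1 / (ρ * Xn ρ n) * (ρ * Xn ρ n) = 1 := by
      field_simp
    linarith [h4 ▸ h3]

/-- ρ·(n · log R_n) ≥ n·log x_n − ρ -/
lemma n_log_Rn_ge {n : ℕ} (hn : 1 ≤ n) :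
    (n:ℝ) * Real.log (Xn ρ n) - ρ ≤ ρ * ((n:ℝ) * Real.log (Rn ρ n)) := by
  have hρ0 : (0:ℝ) < ρ := by linarith
  have hx : (1:ℝ) ≤ Xn ρ n := Xn_pos hρ hn
  have hx0 : (0:ℝ) < Xn ρ n := by linarith
  have hn1 : (1:ℝ) ≤ (n:ℝ) := by exact_mod_cast hn
  obtain ⟨hd0, hd1⟩ := delta_bounds hρ hn
  have hge := log_Rn_ge hρ hn
  have h3 : Real.log (Xn ρ n) -
      ρ * (Real.log (Xn ρ n + 1/ρ) - Real.log (Xn ρ n)) ≤ ρ * Real.log (Rn ρ n) := by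
    nlinarith [hge, hd0]
  have hnΔ : (n:ℝ) * (Real.log (Xn ρ n + 1/ρ) - Real.log (Xn ρ n)) ≤ 1 := by
    have hid := Xn_id hρ n
    rw [hid] at hd1
    nlinarith [hd1, mul_nonneg (show (0:ℝ) ≤ ρ - 1 by linarith) hd0]
  have h5 := mul_le_mul_of_nonneg_left h3 (by positivity : (0:ℝ) ≤ (n:ℝ))
  have h6 := mul_le_mul_of_nonneg_left hnΔ hρ0.le
  nlinarith [h5, h6]

/-- Lemma E (scaled by ρ) -/
lemma logGamma_le (n : ℕ) (hn : 1 ≤ n) :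
    ρ * Real.log (Real.Gamma (1 + (n:ℝ)/ρ)) ≤
      ρ * ((n:ℝ) * Real.log (Rn ρ n)) - (n:ℝ) + ρ * Real.log (Xn ρ n) + ρ + 1 := by
  have hρ0 : (0:ℝ) < ρ := by linarith
  have hsum : ρ * ∑ k ∈ Finset.range n, Real.log (Rn ρ (k+1)) ≤
      ∑ k ∈ Finset.range n, Real.log (Xn ρ (k+1)) := by
    rw [Finset.mul_sum]
    apply Finset.sum_le_sum
    intro k _
    exact log_Rn_le hρ (Nat.le_add_left 1 k)
  have hD := sum_log_Xn hρ n hn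
  have hlow := n_log_Rn_ge hρ hn
  rw [logGamma_telescope hρ n]
  linarith

/-- R_n^ρ ≤ x_n -/
lemma Rn_rpow_le {n : ℕ} (hn : 1 ≤ n) : Rn ρ n ^ ρ ≤ Xn ρ n := by
  have hρ0 : (0:ℝ) < ρ := by linarith
  have hx : (1:ℝ) ≤ Xn ρ n := Xn_pos hρ hn
  have hx0 : (0:ℝ) < Xn ρ n := by linarith
  rw [Real.rpow_def_of_pos (Rn_pos hρ hn)]
  have h1 : Real.log (Rn ρ n) * ρ ≤ Real.log (Xn ρ n) := by
    have := log_Rn_le hρ hn; linarith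
  calc Real.exp (Real.log (Rn ρ n) * ρ) ≤ Real.exp (Real.log (Xn ρ n)) :=
        Real.exp_le_exp.mpr h1
  _ = Xn ρ n := Real.exp_log hx0

/-- x_n - 1 ≤ R_n^ρ -/
lemma Rn_rpow_ge {n : ℕ} (hn : 1 ≤ n) : Xn ρ n - 1 ≤ Rn ρ n ^ ρ := by
  have hρ0 : (0:ℝ) < ρ := by linarith
  have hx : (1:ℝ) ≤ Xn ρ n := Xn_pos hρ hn
  have hx0 : (0:ℝ) < Xn ρ n := by linarith
  obtain ⟨hd0, hd1⟩ := delta_bounds hρ hn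
  have hge := log_Rn_ge hρ hn
  have hΔle : ρ * (Real.log (Xn ρ n + 1/ρ) - Real.log (Xn ρ n)) ≤ 1 / Xn ρ n := by
    rw [le_div_iff₀ hx0]
    nlinarith [hd1]
  have hkey : Real.log (Xn ρ n) - 1 / Xn ρ n ≤ Real.log (Rn ρ n) * ρ := by
    nlinarith [hge, hd0, hΔle]
  rw [Real.rpow_def_of_pos (Rn_pos hρ hn)]
  have h2 : Real.exp (Real.log (Xn ρ n) - 1 / Xn ρ n) ≤ Real.exp (Real.log (Rn ρ n) * ρ) :=
    Real.exp_le_exp.mpr hkey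
  have h3 : Xn ρ n - 1 ≤ Real.exp (Real.log (Xn ρ n) - 1 / Xn ρ n) := by
    rw [Real.exp_sub, Real.exp_log hx0]
    have h4 : 1 - 1/Xn ρ n ≤ Real.exp (-(1/Xn ρ n)) := by
      have := Real.add_one_le_exp (-(1/Xn ρ n))
      linarith
    have h5 : Xn ρ n * (1 - 1/Xn ρ n) = Xn ρ n - 1 := by field_simp
    calc Xn ρ n - 1 = Xn ρ n * (1 - 1/Xn ρ n) := h5.symm
    _ ≤ Xn ρ n * Real.exp (-(1/Xn ρ n)) := mul_le_mul_of_nonneg_left h4 hx0.le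
    _ = Xn ρ n / Real.exp (1/Xn ρ n) := by rw [Real.exp_neg]; ring
  exact h3.trans h2

end

lemma cpow_re_eq {ρ : ℝ} (z : ℂ) (hz : z ≠ 0) :
    (z ^ (ρ:ℂ)).re = ‖z‖ ^ ρ * Real.cos (ρ * z.arg) := by
  rw [Complex.cpow_def_of_ne_zero hz, Complex.exp_re]
  have h1 : (Complex.log z * ρ).re = Real.log ‖z‖ * ρ := by
    simp [Complex.log_re, Complex.mul_re, Complex.ofReal_re, Complex.ofReal_im]
  have h2 : (Complex.log z * ρ).im = z.arg * ρ := by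
    simp [Complex.log_im, Complex.mul_im, Complex.ofReal_re, Complex.ofReal_im]
  rw [h1, h2]
  have habs : (0:ℝ) < ‖z‖ := norm_pos_iff.mpr hz
  rw [Real.rpow_def_of_pos habs]
  ring_nf

/-- bounds on r for z in the region -/
lemma r_bounds {ρ δ₃ h : ℝ} (hρ : 1 < ρ) (hδ₃ : 0 < δ₃) (hh : 0 < h)
    {r φ : ℝ} (hr : 0 < r) (hφ : |φ| ≤ π / (2 * ρ) - δ₃)
    (hcon : r ^ ρ * Real.cos (ρ * φ) - 1 - ρ * Real.log r ≤ -h) :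
    (h - 1) / ρ ≤ Real.log r ∧
    Real.log r ≤ Real.log (max 1 ((2*ρ/Real.sin (ρ*δ₃)) ^ (1/(ρ-1)))) := by
  have hρ0 : (0:ℝ) < ρ := by linarith
  -- δ₃ ≤ π/(2ρ)
  have hδπ : δ₃ ≤ π / (2*ρ) := by
    have := abs_nonneg φ
    linarith [hφ]
  have hρδ : ρ * δ₃ ≤ π / 2 := by
    have h6 := (le_div_iff₀ (by positivity : (0:ℝ) < 2*ρ)).mp hδπ
    nlinarith [h6]
  -- |ρ φ| ≤ π/2 - ρ δ₃
  have hρφ : |ρ * φ| ≤ π/2 - ρ * δ₃ := by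
    rw [abs_mul, abs_of_pos hρ0]
    have h2 : ρ * |φ| ≤ ρ * (π/(2*ρ) - δ₃) := mul_le_mul_of_nonneg_left hφ hρ0.le
    have h3 : ρ * (π/(2*ρ) - δ₃) = π/2 - ρ*δ₃ := by field_simp
    linarith [h3 ▸ h2]
  set c := Real.sin (ρ*δ₃) with hc
  have hc0 : 0 < c := Real.sin_pos_of_pos_of_lt_pi (by positivity)
    (lt_of_le_of_lt hρδ (by linarith [Real.pi_pos]))
  have hc1 : c ≤ 1 := Real.sin_le_one _
  -- cos(ρφ) ≥ c
  have hcos : c ≤ Real.cos (ρ * φ) := by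
    rw [← Real.cos_abs (ρ * φ)]
    have h5 : Real.cos (π/2 - ρ*δ₃) ≤ Real.cos |ρ*φ| :=
      Real.cos_le_cos_of_nonneg_of_le_pi (abs_nonneg _)
        (by nlinarith [Real.pi_pos, mul_pos hρ0 hδ₃]) hρφ
    rw [Real.cos_pi_div_two_sub] at h5
    exact h5
  have hcospos : 0 < Real.cos (ρ * φ) := lt_of_lt_of_le hc0 hcos
  have hrρ : (0:ℝ) < r ^ ρ := Real.rpow_pos_of_pos hr ρ
  constructor
  · -- lower bound
    have : 0 ≤ r ^ ρ * Real.cos (ρ * φ) := by positivity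
    rw [div_le_iff₀ hρ0]
    nlinarith [hcon]
  · -- upper bound: r ≤ M
    set M := max 1 ((2*ρ/c) ^ (1/(ρ-1))) with hM
    have hM1 : (1:ℝ) ≤ M := le_max_left _ _
    have hrM : r ≤ M := by
      by_contra hcon2
      push_neg at hcon2
      have hr1 : (1:ℝ) < r := lt_of_le_of_lt hM1 hcon2
      -- r^(ρ-1) > 2ρ/c
      have ha0 : (0:ℝ) ≤ 2*ρ/c := by positivity
      have hexp : (0:ℝ) < ρ - 1 := by linarith
      have hA : ((2*ρ/c) ^ (1/(ρ-1))) ^ (ρ-1) = 2*ρ/c := by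
        rw [← Real.rpow_mul ha0, one_div, inv_mul_cancel₀ hexp.ne', Real.rpow_one]
      have hB : ((2*ρ/c) ^ (1/(ρ-1))) ^ (ρ-1) < r ^ (ρ-1) := by
        apply Real.rpow_lt_rpow (by positivity) _ hexp
        exact lt_of_le_of_lt (le_max_right 1 _) hcon2
      rw [hA] at hB
      have hsplit : r ^ ρ = r ^ (ρ-1) * r := by
        rw [← Real.rpow_add_one hr.ne' (ρ-1)]
        ring_nf
      have hkey : 2*ρ*r < c * r ^ ρ := by
        rw [hsplit]
        have := mul_lt_mul_of_pos_right hB hr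
        have h7 : (2*ρ/c) * r * c = 2*ρ*r := by field_simp
        nlinarith [mul_lt_mul_of_pos_left (mul_lt_mul_of_pos_right hB hr) hc0]
      have hcos2 : c * r ^ ρ ≤ r ^ ρ * Real.cos (ρ * φ) := by
        nlinarith [mul_le_mul_of_nonneg_left hcos hrρ.le]
      have hlog : Real.log r ≤ r - 1 := Real.log_le_sub_one_of_pos hr
      nlinarith [hcon, hkey, hcos2, hlog, mul_le_mul_of_nonneg_left hlog hρ0.le]
    exact Real.log_le_log hr hrM

lemma tendsto_bound (ρ h C : ℝ) (hρ : 1 < ρ) (hh : 0 < h) :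
    Tendsto (fun n : ℕ => C + ρ * Real.log (Xn ρ n) - h * ((n:ℝ) - 1)) atTop atBot := by
  have hρ0 : (0:ℝ) < ρ := by linarith
  have hXatTop : Tendsto (fun n : ℕ => Xn ρ n) atTop atTop := by
    unfold Xn
    apply tendsto_atTop_add_const_left
    apply Tendsto.atTop_div_const hρ0
    apply tendsto_atTop_add_const_right
    exact tendsto_natCast_atTop_atTop
  have hg : Tendsto (fun y : ℝ => C + ρ * Real.log y - h * (ρ * (y - 1))) atTop atBot := by
    have hlittle : ∀ᶠ y : ℝ in atTop, ‖Real.log y‖ ≤ (h/2) * ‖y‖ :=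
      Real.isLittleO_log_id_atTop.def (by positivity)
    have hev : ∀ᶠ y : ℝ in atTop,
        C + ρ * Real.log y - h * (ρ * (y - 1)) ≤ C + h*ρ - (ρ*h/2) * y := by
      filter_upwards [hlittle, eventually_ge_atTop (0:ℝ)] with y h1 h2
      have h3 : Real.log y ≤ (h/2) * y := by
        have := le_abs_self (Real.log y)
        rw [Real.norm_eq_abs, Real.norm_eq_abs, _root_.abs_of_nonneg h2] at h1
        linarith
      nlinarith [mul_le_mul_of_nonneg_left h3 hρ0.le]
    have hrhs : Tendsto (fun y : ℝ => C + h*ρ - (ρ*h/2) * y) atTop atBot := by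
      have h4 : Tendsto (fun y : ℝ => (ρ*h/2) * y) atTop atTop :=
        Tendsto.const_mul_atTop (by positivity) tendsto_id
      have h5 : Tendsto (fun y : ℝ => -((ρ*h/2) * y)) atTop atBot := tendsto_neg_atTop_atBot.comp h4
      simp only [sub_eq_add_neg]
      exact tendsto_atBot_add_const_left _ _ h5
    exact tendsto_atBot_mono' atTop hev hrhs
  have hcomp := hg.comp hXatTop
  have heq : (fun y : ℝ => C + ρ * Real.log y - h * (ρ * (y - 1))) ∘ (fun n : ℕ => Xn ρ n)
      = fun n : ℕ => C + ρ * Real.log (Xn ρ n) - h * ((n:ℝ) - 1) := by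
    funext n
    simp only [Function.comp_apply]
    have := Xn_id hρ n
    have h6 : ρ * (Xn ρ n - 1) = (n:ℝ) - 1 := by linarith [this]
    rw [h6]
  rw [heq] at hcomp
  exact hcomp

set_option maxHeartbeats 1000000 in
theorem stmt13 (ρ : ℝ) (hρ : 1 < ρ) (δ₃ h : ℝ) (hδ₃ : 0 < δ₃) (hh : 0 < h) :
    ∀ ε > (0 : ℝ), ∃ N : ℕ, ∀ n ≥ N, ∀ z : ℂ,
      0 < ‖z‖ → |z.arg| ≤ π / (2 * ρ) - δ₃ →
      ‖z‖ ^ ρ * Real.cos (ρ * z.arg) - 1 - ρ * Real.log (‖z‖) ≤ -h →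
      ‖J1 ρ n z‖ < ε := by
  intro ε hε
  have hρ0 : (0:ℝ) < ρ := by linarith
  set M : ℝ := max 1 ((2*ρ/Real.sin (ρ*δ₃)) ^ (1/(ρ-1))) with hM
  set Mr : ℝ := max (Real.log M) ((1-h)/ρ) with hMr
  have hMr0 : 0 ≤ Mr := le_trans (Real.log_nonneg (le_max_left _ _)) (le_max_left _ _)
  set C : ℝ := 2*ρ + ρ^2 * Mr with hC
  have htends := (tendsto_bound ρ h C hρ hh).eventually_le_atBot (ρ * Real.log ε - 1)
  obtain ⟨N₀, hN₀⟩ := eventually_atTop.mp htends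
  refine ⟨max N₀ 1, fun n hn z hz hargz hconz => ?_⟩
  have hn1 : 1 ≤ n := le_trans (le_max_right N₀ 1) hn
  have hnN : N₀ ≤ n := le_trans (le_max_left N₀ 1) hn
  set r : ℝ := ‖z‖ with hr_def
  have hr : 0 < r := hz
  have hzne : z ≠ 0 := norm_ne_zero_iff.mp hz.ne'
  obtain ⟨hlb, hub⟩ := r_bounds hρ hδ₃ hh hr hargz hconz
  have hlogr_abs : |Real.log r| ≤ Mr := by
    rw [abs_le]
    constructor
    · have : -((1-h)/ρ) = (h-1)/ρ := by ring
      have h2 : -Mr ≤ -((1-h)/ρ) := neg_le_neg (le_max_right _ _)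
      linarith [this ▸ h2]
    · exact le_trans hub (le_max_left _ _)
  -- positivity facts
  have hG : 0 < Real.Gamma (1 + (n:ℝ)/ρ) := Real.Gamma_pos_of_pos (by positivity)
  have hR : 0 < Rn ρ n := Rn_pos hρ hn1
  set A : ℝ := Rn ρ n ^ ρ with hA_def
  have hA0 : 0 < A := Real.rpow_pos_of_pos hR ρ
  -- compute |J1|
  have habs : ‖J1 ρ n z‖ =
      Real.exp (A * (‖z‖ ^ ρ * Real.cos (ρ * z.arg))) *
        Real.Gamma (1 + (n:ℝ)/ρ) / (Rn ρ n ^ n * r ^ n) := by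
    unfold J1
    rw [norm_div, norm_mul, norm_mul, norm_pow, norm_pow, Complex.norm_exp]
    rw [Complex.norm_real, Complex.norm_real, Real.norm_eq_abs, Real.norm_eq_abs, _root_.abs_of_nonneg hG.le,
      _root_.abs_of_nonneg hR.le]
    congr 2
    rw [Complex.re_ofReal_mul, cpow_re_eq z hzne]
  have hP : (0:ℝ) < Rn ρ n ^ n * r ^ n := by positivity
  have hexp_form : ‖J1 ρ n z‖ =
      Real.exp (A * (r ^ ρ * Real.cos (ρ * z.arg)) +
        Real.log (Real.Gamma (1 + (n:ℝ)/ρ)) - Real.log (Rn ρ n ^ n * r ^ n)) := by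
    rw [habs, Real.exp_sub, Real.exp_add, Real.exp_log hG, Real.exp_log hP]
  rw [hexp_form]
  -- it suffices to bound the exponent by log ε
  have hεlog : Real.exp (Real.log ε) = ε := Real.exp_log hε
  rw [← hεlog]
  apply Real.exp_lt_exp.mpr
  -- expand log of product
  have hlogP : Real.log (Rn ρ n ^ n * r ^ n) =
      (n:ℝ) * Real.log (Rn ρ n) + (n:ℝ) * Real.log r := by
    rw [Real.log_mul (pow_pos hR n).ne' (pow_pos hr n).ne', Real.log_pow, Real.log_pow]
  rw [hlogP]
  -- main chain
  have f1 : r ^ ρ * Real.cos (ρ * z.arg) ≤ 1 + ρ * Real.log r - h := by linarith [hconz]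
  have f2 : A * (r ^ ρ * Real.cos (ρ * z.arg)) ≤ A * (1 + ρ * Real.log r - h) :=
    mul_le_mul_of_nonneg_left f1 hA0.le
  have g1 := mul_le_mul_of_nonneg_left f2 hρ0.le
  have f3 := logGamma_le hρ n hn1
  have f4 : ρ * A ≤ ρ + (n:ℝ) - 1 := by
    have := mul_le_mul_of_nonneg_left (Rn_rpow_le hρ hn1) hρ0.le
    linarith [Xn_id hρ n]
  have f5 : (n:ℝ) - 1 ≤ ρ * A := by
    have := mul_le_mul_of_nonneg_left (Rn_rpow_ge hρ hn1) hρ0.le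
    have h6 : ρ * (Xn ρ n - 1) = (n:ℝ) - 1 := by linarith [Xn_id hρ n]
    linarith
  have hcross : ρ * Real.log r * (ρ * A - (n:ℝ)) ≤ ρ^2 * Mr := by
    have h7 : |ρ * A - (n:ℝ)| ≤ ρ := by
      rw [abs_le]; constructor <;> linarith [f4, f5]
    have h8 : |ρ * Real.log r| ≤ ρ * Mr := by
      rw [abs_mul, _root_.abs_of_nonneg hρ0.le]
      exact mul_le_mul_of_nonneg_left hlogr_abs hρ0.le
    calc ρ * Real.log r * (ρ * A - (n:ℝ)) ≤ |ρ * Real.log r * (ρ * A - (n:ℝ))| :=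
          le_abs_self _
    _ = |ρ * Real.log r| * |ρ * A - (n:ℝ)| := abs_mul _ _
    _ ≤ (ρ * Mr) * ρ := mul_le_mul h8 h7 (abs_nonneg _) (by positivity)
    _ = ρ^2 * Mr := by ring
  have hhA : h * ((n:ℝ) - 1) ≤ h * (ρ * A) := mul_le_mul_of_nonneg_left f5 hh.le
  have hfinal := hN₀ n hnN
  -- ρ * exponent ≤ ρ log ε - 1
  have hmain : ρ * (A * (r ^ ρ * Real.cos (ρ * z.arg)) +
      Real.log (Real.Gamma (1 + (n:ℝ)/ρ)) -
      ((n:ℝ) * Real.log (Rn ρ n) + (n:ℝ) * Real.log r)) ≤ ρ * Real.log ε - 1 := by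
    linarith [g1, f3, f4, hcross, hhA, hfinal, hC]
  have hlt : ρ * (A * (r ^ ρ * Real.cos (ρ * z.arg)) +
      Real.log (Real.Gamma (1 + (n:ℝ)/ρ)) -
      ((n:ℝ) * Real.log (Rn ρ n) + (n:ℝ) * Real.log r)) < ρ * Real.log ε := by
    linarith
  exact (mul_lt_mul_iff_right₀ hρ0).mp hlt
end

section
/- Let ρ > 1, δ₃ > 0, h > 0, and define J₂'(n,z) = Γ(1+n/ρ)/(R_n^{n+1} z^{n+1}). Then sup over z ∈ Ω₃ of |J₂'(n,z)| tends to 0 as n → ∞, where Ω₃ = {z = re^{iφ} : r ≥ e^{−1/ρ} + h, |φ| ≥ π/(2ρ) + δ₃}. -/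
open Complex Real Filter Topology

/-- `J₂·(n,z) = Γ(1+n/ρ)/(R_n^{n+1} z^{n+1})`. -/
noncomputable def J2 (ρ : ℝ) (n : ℕ) (z : ℂ) : ℂ :=
  (Real.Gamma (1 + (n : ℝ) / ρ) : ℂ) / ((Rn ρ n : ℂ) ^ (n + 1) * z ^ (n + 1))

lemma gamma_interp {a t : ℝ} (ha : 0 < a) (ht0 : 0 ≤ t) (ht1 : t ≤ 1) :
    Real.Gamma (a + t) ≤ Real.Gamma a ^ (1 - t) * Real.Gamma (a + 1) ^ t := by
  have h := Real.convexOn_log_Gamma.2 (Set.mem_Ioi.2 ha)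
    (Set.mem_Ioi.2 (by linarith : (0:ℝ) < a + 1))
    (by linarith : (0:ℝ) ≤ 1 - t) ht0 (by ring)
  simp only [smul_eq_mul, Function.comp_apply] at h
  have hat : (1 - t) * a + t * (a + 1) = a + t := by ring
  rw [hat] at h
  have h1 : Real.Gamma (a + t) = Real.exp (Real.log (Real.Gamma (a + t))) :=
    (Real.exp_log (Real.Gamma_pos_of_pos (by linarith))).symm
  rw [h1]
  calc Real.exp (Real.log (Real.Gamma (a + t)))
      ≤ Real.exp ((1 - t) * Real.log (Real.Gamma a) + t * Real.log (Real.Gamma (a + 1))) :=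
        Real.exp_le_exp.2 h
    _ = Real.Gamma a ^ (1 - t) * Real.Gamma (a + 1) ^ t := by
        rw [Real.exp_add, mul_comm (1-t), mul_comm t, Real.exp_mul, Real.exp_mul,
          Real.exp_log (Real.Gamma_pos_of_pos ha),
          Real.exp_log (Real.Gamma_pos_of_pos (by linarith : (0:ℝ) < a + 1))]

lemma gamma_ratio_upper {y s : ℝ} (hy : 0 < y) (hs0 : 0 ≤ s) (hs1 : s ≤ 1) :
    Real.Gamma (y + s) ≤ Real.Gamma y * y ^ s := by
  have hG := Real.Gamma_pos_of_pos hy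
  calc Real.Gamma (y + s) ≤ Real.Gamma y ^ (1 - s) * Real.Gamma (y + 1) ^ s :=
        gamma_interp hy hs0 hs1
    _ = Real.Gamma y * y ^ s := by
        rw [Real.Gamma_add_one hy.ne', Real.mul_rpow hy.le hG.le,
          show Real.Gamma y ^ (1-s) * (y ^ s * Real.Gamma y ^ s)
            = (Real.Gamma y ^ (1-s) * Real.Gamma y ^ s) * y ^ s by ring,
          ← Real.rpow_add hG]
        norm_num

lemma gamma_ratio_lower {x s : ℝ} (hx : 0 < x) (hs0 : 0 ≤ s) (hs1 : s ≤ 1) :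
    x ^ s * Real.Gamma (x + 1 - s) ≤ Real.Gamma (x + 1) := by
  have hG := Real.Gamma_pos_of_pos hx
  have h := gamma_interp (a := x) (t := 1 - s) hx (by linarith) (by linarith)
  have hxs : x + (1 - s) = x + 1 - s := by ring
  rw [hxs] at h
  have h2 : x ^ s * Real.Gamma (x + 1 - s)
      ≤ x ^ s * (Real.Gamma x ^ (1 - (1 - s)) * Real.Gamma (x + 1) ^ (1 - s)) :=
    mul_le_mul_of_nonneg_left h (Real.rpow_nonneg hx.le s)
  refine h2.trans (le_of_eq ?_)
  have : (1 : ℝ) - (1 - s) = s := by ring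
  rw [this, show x ^ s * (Real.Gamma x ^ s * Real.Gamma (x+1) ^ (1-s))
      = (x * Real.Gamma x) ^ s * Real.Gamma (x+1) ^ (1-s) by
        rw [Real.mul_rpow hx.le hG.le]; ring,
    ← Real.Gamma_add_one hx.ne', ← Real.rpow_add (Real.Gamma_pos_of_pos (by linarith))]
  norm_num

lemma Rn_lower {ρ : ℝ} (hρ : 1 < ρ) {n : ℕ} (hn : 1 ≤ n) :
    ((n:ℝ)/ρ) ^ ((1:ℝ)/ρ) ≤ Rn ρ n := by
  have hρ0 : (0:ℝ) < ρ := by linarith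
  have hn1 : (1:ℝ) ≤ (n:ℝ) := by exact_mod_cast hn
  have hx : (0:ℝ) < (n:ℝ)/ρ := by positivity
  have hs0 : (0:ℝ) ≤ 1/ρ := by positivity
  have hs1 : (1:ℝ)/ρ ≤ 1 := by rw [div_le_one hρ0]; linarith
  have h := gamma_ratio_lower hx hs0 hs1
  have he1 : (n:ℝ)/ρ + 1 - 1/ρ = 1 + ((n:ℝ)-1)/ρ := by field_simp; ring
  have he2 : (n:ℝ)/ρ + 1 = 1 + (n:ℝ)/ρ := by ring
  rw [he1, he2] at h
  have hGpos : 0 < Real.Gamma (1 + ((n:ℝ)-1)/ρ) := by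
    apply Real.Gamma_pos_of_pos
    have : (0:ℝ) ≤ ((n:ℝ)-1)/ρ := div_nonneg (by linarith) hρ0.le
    linarith
  rw [Rn, le_div_iff₀ hGpos]
  linarith

lemma Rn_upper {ρ : ℝ} (hρ : 1 < ρ) (n : ℕ) :
    Real.Gamma (1 + ((n:ℝ)+1)/ρ) ≤ Real.Gamma (1 + (n:ℝ)/ρ) * (1 + (n:ℝ)/ρ) ^ ((1:ℝ)/ρ) := by
  have hρ0 : (0:ℝ) < ρ := by linarith
  have hy : (0:ℝ) < 1 + (n:ℝ)/ρ := by positivity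
  have h := gamma_ratio_upper hy (by positivity : (0:ℝ) ≤ 1/ρ)
    (by rw [div_le_one hρ0]; linarith)
  have : 1 + (n:ℝ)/ρ + 1/ρ = 1 + ((n:ℝ)+1)/ρ := by ring
  rwa [this] at h

noncomputable def bAux (ρ r₀ : ℝ) (n : ℕ) : ℝ :=
  Real.Gamma (1 + (n:ℝ)/ρ) / (((n:ℝ)/ρ) ^ (((n:ℝ)+1)/ρ) * r₀ ^ (n+1))

noncomputable def cAux (ρ r₀ : ℝ) (n : ℕ) : ℝ :=
  ((ρ+(n:ℝ))/((n:ℝ)+1)) ^ ((1:ℝ)/ρ) * (((n:ℝ)/((n:ℝ)+1)) ^ (((n:ℝ)+1)/ρ)) / r₀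

lemma bAux_nonneg {ρ r₀ : ℝ} (hρ : 0 < ρ) (hr : 0 ≤ r₀) (n : ℕ) : 0 ≤ bAux ρ r₀ n := by
  have : 0 < Real.Gamma (1 + (n:ℝ)/ρ) := Real.Gamma_pos_of_pos (by positivity)
  unfold bAux
  positivity

lemma bAux_succ_le {ρ r₀ : ℝ} (hρ : 1 < ρ) (hr : 0 < r₀) {n : ℕ} (hn : 1 ≤ n) :
    bAux ρ r₀ (n+1) ≤ cAux ρ r₀ n * bAux ρ r₀ n := by
  have hρ0 : (0:ℝ) < ρ := by linarith
  have hn1 : (1:ℝ) ≤ (n:ℝ) := by exact_mod_cast hn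
  have hn0 : (0:ℝ) < (n:ℝ) := by linarith
  have hΓ : 0 < Real.Gamma (1 + (n:ℝ)/ρ) := Real.Gamma_pos_of_pos (by positivity)
  -- abbreviations
  set u : ℝ := ((ρ+(n:ℝ))/((n:ℝ)+1)) ^ ((1:ℝ)/ρ) with hu
  set v : ℝ := ((n:ℝ)/((n:ℝ)+1)) ^ (((n:ℝ)+1)/ρ) with hv
  set w : ℝ := (1 + (n:ℝ)/ρ) ^ ((1:ℝ)/ρ) with hw
  set D : ℝ := ((n:ℝ)/ρ) ^ (((n:ℝ)+1)/ρ) with hD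
  set D' : ℝ := (((n:ℝ)+1)/ρ) ^ (((n:ℝ)+2)/ρ) with hD'
  have hupos : 0 < u := Real.rpow_pos_of_pos (by positivity) _
  have hvpos : 0 < v := Real.rpow_pos_of_pos (by positivity) _
  have hwpos : 0 < w := Real.rpow_pos_of_pos (by positivity) _
  have hDpos : 0 < D := Real.rpow_pos_of_pos (by positivity) _
  have hD'pos : 0 < D' := Real.rpow_pos_of_pos (by positivity) _
  have e1 : D' = (((n:ℝ)+1)/ρ) ^ ((1:ℝ)/ρ) * (((n:ℝ)+1)/ρ) ^ (((n:ℝ)+1)/ρ) := by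
    rw [hD', ← Real.rpow_add (by positivity)]
    congr 1; ring
  have e2 : u * (((n:ℝ)+1)/ρ) ^ ((1:ℝ)/ρ) = (1 + (n:ℝ)/ρ) ^ ((1:ℝ)/ρ) := by
    rw [hu, ← Real.mul_rpow (by positivity) (by positivity)]
    congr 1; field_simp
  have e3 : v * (((n:ℝ)+1)/ρ) ^ (((n:ℝ)+1)/ρ) = D := by
    rw [hv, hD, ← Real.mul_rpow (by positivity) (by positivity)]
    congr 1; field_simp
  have key : w * D = u * v * D' := by
    rw [e1, show u * v * ((((n:ℝ)+1)/ρ) ^ ((1:ℝ)/ρ) * (((n:ℝ)+1)/ρ) ^ (((n:ℝ)+1)/ρ))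
        = (u * (((n:ℝ)+1)/ρ) ^ ((1:ℝ)/ρ)) * (v * (((n:ℝ)+1)/ρ) ^ (((n:ℝ)+1)/ρ)) by ring,
      e2, e3, hw]
  have hb' : bAux ρ r₀ (n+1) = Real.Gamma (1 + ((n:ℝ)+1)/ρ) / (D' * r₀^(n+2)) := by
    rw [bAux, hD']
    push_cast
    ring_nf
  have hcb : cAux ρ r₀ n * bAux ρ r₀ n
      = (u * v * Real.Gamma (1 + (n:ℝ)/ρ)) / (D * r₀^(n+1) * r₀) := by
    rw [cAux, bAux, ← hu, ← hv, ← hD]; ring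
  rw [hb', hcb, div_le_div_iff₀ (by positivity) (by positivity)]
  have hup := Rn_upper hρ n
  calc Real.Gamma (1 + ((n:ℝ)+1)/ρ) * (D * r₀^(n+1) * r₀)
      ≤ (Real.Gamma (1 + (n:ℝ)/ρ) * w) * (D * r₀^(n+1) * r₀) := by
        apply mul_le_mul_of_nonneg_right _ (by positivity)
        rw [hw]; exact hup
    _ = (w * D) * (Real.Gamma (1 + (n:ℝ)/ρ) * (r₀^(n+1) * r₀)) := by ring
    _ = (u * v * D') * (Real.Gamma (1 + (n:ℝ)/ρ) * (r₀^(n+1) * r₀)) := by rw [key]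
    _ = u * v * Real.Gamma (1 + (n:ℝ)/ρ) * (D' * r₀^(n+2)) := by ring

lemma cAux_tendsto {ρ r₀ : ℝ} (hρ : 1 < ρ) :
    Tendsto (cAux ρ r₀) atTop (𝓝 (Real.exp (-(1/ρ)) / r₀)) := by
  have hρ0 : (0:ℝ) < ρ := by linarith
  have h1 : Tendsto (fun n : ℕ => (ρ+(n:ℝ))/((n:ℝ)+1)) atTop (𝓝 1) := by
    have h0 : Tendsto (fun n : ℕ => (ρ-1)/((n:ℝ)+1)) atTop (𝓝 0) := by
      have := (tendsto_const_div_atTop_nhds_zero_nat (ρ-1)).comp (tendsto_add_atTop_nat 1)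
      refine this.congr fun n => ?_
      simp only [Function.comp_apply]
      push_cast; ring
    have h2 := h0.const_add 1
    rw [add_zero] at h2
    refine h2.congr fun n => ?_
    have : ((n:ℝ)+1) ≠ 0 := by positivity
    field_simp; ring
  have h1' : Tendsto (fun n : ℕ => ((ρ+(n:ℝ))/((n:ℝ)+1)) ^ ((1:ℝ)/ρ)) atTop (𝓝 1) := by
    have := h1.rpow_const (p := 1/ρ) (Or.inr (by positivity))
    simpa using this
  have h2 : Tendsto (fun n : ℕ => ((n:ℝ)/((n:ℝ)+1)) ^ (n+1)) atTop (𝓝 (Real.exp (-1))) := by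
    have := (Real.tendsto_one_add_div_pow_exp (-1)).comp (tendsto_add_atTop_nat 1)
    refine this.congr fun n => ?_
    simp only [Function.comp_apply]
    congr 1
    have : ((n:ℝ)+1) ≠ 0 := by positivity
    push_cast
    field_simp
    ring
  have h2' : Tendsto (fun n : ℕ => ((n:ℝ)/((n:ℝ)+1)) ^ (((n:ℝ)+1)/ρ)) atTop
      (𝓝 (Real.exp (-(1/ρ)))) := by
    have h3 := h2.rpow_const (p := 1/ρ) (Or.inr (by positivity))
    have he : Real.exp (-1) ^ ((1:ℝ)/ρ) = Real.exp (-(1/ρ)) := by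
      rw [← Real.exp_mul]; norm_num
    rw [he] at h3
    refine h3.congr fun n => ?_
    rw [← Real.rpow_natCast ((n:ℝ)/((n:ℝ)+1)) (n+1), ← Real.rpow_mul (by positivity)]
    congr 1
    push_cast; ring
  have := (h1'.mul h2').div_const r₀
  rw [one_mul] at this
  exact this

theorem stmt14 (ρ : ℝ) (hρ : 1 < ρ) (δ₃ h : ℝ) (hδ₃ : 0 < δ₃) (hh : 0 < h) :
    ∀ ε > (0 : ℝ), ∃ N : ℕ, ∀ n ≥ N, ∀ z : ℂ,
      Real.exp (-(1 / ρ)) + h ≤ ‖z‖ → π / (2 * ρ) + δ₃ ≤ |z.arg| →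
      ‖J2 ρ n z‖ < ε := by
  intro ε hε
  have hρ0 : (0:ℝ) < ρ := by linarith
  set r₀ : ℝ := Real.exp (-(1/ρ)) + h with hr₀def
  have hr₀pos : 0 < r₀ := by positivity
  have hL : Real.exp (-(1/ρ)) / r₀ < 1 := by
    rw [div_lt_one hr₀pos, hr₀def]; linarith
  set L : ℝ := Real.exp (-(1/ρ)) / r₀ with hLdef
  have hL0 : 0 ≤ L := by positivity
  set r : ℝ := (L+1)/2 with hrdef
  have hLr : L < r := by rw [hrdef]; linarith
  have hr1 : r < 1 := by rw [hrdef]; linarith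
  -- ratio condition
  have hev : ∀ᶠ n in atTop, ‖bAux ρ r₀ (n+1)‖ ≤ r * ‖bAux ρ r₀ n‖ := by
    filter_upwards [(cAux_tendsto (r₀ := r₀) hρ).eventually_lt_const hLr,
      eventually_ge_atTop 1] with n hcn hn
    rw [Real.norm_eq_abs, Real.norm_eq_abs, _root_.abs_of_nonneg (bAux_nonneg hρ0 hr₀pos.le _),
      _root_.abs_of_nonneg (bAux_nonneg hρ0 hr₀pos.le _)]
    exact (bAux_succ_le hρ hr₀pos hn).trans
      (mul_le_mul_of_nonneg_right hcn.le (bAux_nonneg hρ0 hr₀pos.le n))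
  have hsum : Summable (bAux ρ r₀) := summable_of_ratio_norm_eventually_le hr1 hev
  have hb0 : Tendsto (bAux ρ r₀) atTop (𝓝 0) := hsum.tendsto_atTop_zero
  obtain ⟨N₀, hN₀⟩ := (hb0.eventually_lt_const hε).exists_forall_of_atTop
  refine ⟨max N₀ 1, fun n hn z hz _ => ?_⟩
  have hn1 : 1 ≤ n := le_trans (le_max_right N₀ 1) hn
  have hnN : N₀ ≤ n := le_trans (le_max_left N₀ 1) hn
  have hn1' : (1:ℝ) ≤ (n:ℝ) := by exact_mod_cast hn1
  have hΓ : 0 < Real.Gamma (1 + (n:ℝ)/ρ) := Real.Gamma_pos_of_pos (by positivity)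
  have hRlow : ((n:ℝ)/ρ) ^ ((1:ℝ)/ρ) ≤ Rn ρ n := Rn_lower hρ hn1
  have hrpowpos : 0 < ((n:ℝ)/ρ) ^ ((1:ℝ)/ρ) := Real.rpow_pos_of_pos (by positivity) _
  have hRpos : 0 < Rn ρ n := lt_of_lt_of_le hrpowpos hRlow
  have hzpos : 0 < ‖z‖ := lt_of_lt_of_le hr₀pos hz
  have habs : ‖J2 ρ n z‖
      = Real.Gamma (1 + (n:ℝ)/ρ) / ((Rn ρ n)^(n+1) * (‖z‖)^(n+1)) := by
    simp only [J2, norm_div, norm_mul, norm_pow, Complex.norm_real, Real.norm_eq_abs]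
    rw [abs_of_pos hΓ, abs_of_pos hRpos]
  have hD : ((n:ℝ)/ρ) ^ (((n:ℝ)+1)/ρ) = (((n:ℝ)/ρ) ^ ((1:ℝ)/ρ))^(n+1) := by
    rw [← Real.rpow_natCast (((n:ℝ)/ρ) ^ ((1:ℝ)/ρ)) (n+1), ← Real.rpow_mul (by positivity)]
    congr 1
    push_cast; ring
  have hle : ‖J2 ρ n z‖ ≤ bAux ρ r₀ n := by
    rw [habs, bAux, hD]
    apply div_le_div_of_nonneg_left hΓ.le (by positivity)
    exact mul_le_mul (pow_le_pow_left₀ hrpowpos.le hRlow _)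
      (pow_le_pow_left₀ hr₀pos.le hz _) (by positivity) (by positivity)
  exact lt_of_le_of_lt hle (hN₀ n hnN)
end

section
/- Let ρ > 1 and set R_n = Γ(1+n/ρ)/Γ(1+(n−1)/ρ). Then there exist a constant C > 0 and N such that for all n ≥ N: |R_n/(n/ρ)^{1/ρ} − (1 + (ρ−1)/(2ρn))| ≤ C/n²; that is, R_n = (n/ρ)^{1/ρ}(1 + (ρ−1)/(2ρn) + O(1/n²)) as n → ∞. -/
open Complex Real Filter Topology

namespace Stmt16Aux

/-- `lf s t = log Γ(t+s) - log Γ(t) - s log t`, the log of `Γ(t+s)/(Γ(t) t^s)`. -/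
noncomputable def lf (s t : ℝ) : ℝ :=
  Real.log (Real.Gamma (t + s)) - Real.log (Real.Gamma t) - s * Real.log t

lemma lf_nonpos {s t : ℝ} (hs : 0 < s) (hs1 : s < 1) (ht : 0 < t) : lf s t ≤ 0 := by
  have h := Real.convexOn_log_Gamma.2 (Set.mem_Ioi.mpr ht)
      (Set.mem_Ioi.mpr (by linarith : (0:ℝ) < t + 1))
      (by linarith : (0:ℝ) ≤ 1 - s) hs.le (by ring)
  simp only [smul_eq_mul, Function.comp_apply] at h
  rw [show (1 - s) * t + s * (t + 1) = t + s by ring] at h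
  rw [Real.Gamma_add_one (ne_of_gt ht),
    Real.log_mul (ne_of_gt ht) (ne_of_gt (Real.Gamma_pos_of_pos ht))] at h
  unfold lf; linarith

lemma lf_lower {s t : ℝ} (hs : 0 < s) (hs1 : s < 1) (ht : 0 < t) :
    (1 - s) * (Real.log t - Real.log (t + s)) ≤ lf s t := by
  have hts : (0:ℝ) < t + s := by linarith
  have h := Real.convexOn_log_Gamma.2 (Set.mem_Ioi.mpr hts)
      (Set.mem_Ioi.mpr (by linarith : (0:ℝ) < t + s + 1))
      hs.le (by linarith : (0:ℝ) ≤ 1 - s) (by ring)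
  simp only [smul_eq_mul, Function.comp_apply] at h
  rw [show s * (t + s) + (1 - s) * (t + s + 1) = t + 1 by ring] at h
  rw [Real.Gamma_add_one (ne_of_gt ht),
    Real.log_mul (ne_of_gt ht) (ne_of_gt (Real.Gamma_pos_of_pos ht)),
    Real.Gamma_add_one (ne_of_gt hts),
    Real.log_mul (ne_of_gt hts) (ne_of_gt (Real.Gamma_pos_of_pos hts))] at h
  unfold lf; linarith

lemma lf_step {s t : ℝ} (hs : 0 < s) (ht : 0 < t) :
    lf s (t + 1) - lf s t = Real.log (1 + s/t) - s * Real.log (1 + 1/t) := by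
  have hts : (0:ℝ) < t + s := by linarith
  have h1 : Real.Gamma (t + 1 + s) = (t + s) * Real.Gamma (t + s) := by
    rw [show t + 1 + s = (t + s) + 1 by ring, Real.Gamma_add_one (ne_of_gt hts)]
  have h2 : Real.Gamma (t + 1) = t * Real.Gamma t := Real.Gamma_add_one (ne_of_gt ht)
  have e1 : (1:ℝ) + s/t = (t + s)/t := by field_simp
  have e2 : (1:ℝ) + 1/t = (t + 1)/t := by field_simp
  unfold lf
  rw [h1, h2, Real.log_mul (ne_of_gt hts) (ne_of_gt (Real.Gamma_pos_of_pos hts)),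
    Real.log_mul (ne_of_gt ht) (ne_of_gt (Real.Gamma_pos_of_pos ht)), e1, e2,
    Real.log_div (by positivity) (ne_of_gt ht), Real.log_div (by positivity) (ne_of_gt ht)]
  ring

lemma lf_tendsto {s y : ℝ} (hs : 0 < s) (hs1 : s < 1) (hy : 0 < y) :
    Tendsto (fun n : ℕ => lf s (y + n)) atTop (𝓝 0) := by
  have h1 : Tendsto (fun n : ℕ => y + (n:ℝ) + s) atTop atTop := by
    apply tendsto_atTop_add_const_right
    exact tendsto_atTop_add_const_left _ y tendsto_natCast_atTop_atTop
  have h2 : Tendsto (fun n : ℕ => s / (y + (n:ℝ) + s)) atTop (𝓝 0) :=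
    Tendsto.div_atTop tendsto_const_nhds h1
  have h3 : Tendsto (fun n : ℕ => 1 - s / (y + (n:ℝ) + s)) atTop (𝓝 1) := by
    have := (tendsto_const_nhds (x := (1:ℝ)) (f := atTop (α := ℕ))).sub h2
    simpa using this
  have h4 : Tendsto (fun n : ℕ => (1 - s) * Real.log (1 - s / (y + (n:ℝ) + s)))
      atTop (𝓝 0) := by
    have hlog : Tendsto (fun n : ℕ => Real.log (1 - s / (y + (n:ℝ) + s))) atTop (𝓝 0) := by
      have := (Real.continuousAt_log (one_ne_zero)).tendsto.comp h3
      simpa [Function.comp_def] using this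
    have := hlog.const_mul (1 - s)
    simpa using this
  apply tendsto_of_tendsto_of_tendsto_of_le_of_le h4 (tendsto_const_nhds (x := (0:ℝ)))
  · intro n
    dsimp only
    have hyn : (0:ℝ) < y + n := by positivity
    have e : 1 - s / (y + (n:ℝ) + s) = (y + n) / (y + n + s) := by
      field_simp
      ring
    rw [e, Real.log_div (ne_of_gt hyn) (by positivity)]
    exact lf_lower hs hs1 hyn
  · intro n
    dsimp only
    exact lf_nonpos hs hs1 (by positivity)

lemma log_taylor1 {u : ℝ} (h0 : 0 ≤ u) (h : u ≤ 1/2) :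
    |Real.log (1 + u) - u| ≤ 2 * u^2 := by
  have hx : |(-u)| < 1 := by rw [abs_neg, _root_.abs_of_nonneg h0]; linarith
  have H := Real.abs_log_sub_add_sum_range_le hx 1
  have hsum : ∑ i ∈ Finset.range 1, (-u)^(i+1)/((i:ℝ)+1) = -u := by
    norm_num
  rw [hsum, show (1:ℝ) - -u = 1 + u by ring, abs_neg, _root_.abs_of_nonneg h0] at H
  have h1 : |Real.log (1 + u) - u| = |(-u) + Real.log (1 + u)| := by
    rw [show (-u) + Real.log (1 + u) = Real.log (1 + u) - u by ring]
  rw [h1]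
  refine H.trans ?_
  have hd : u^(1+1) / (1 - u) ≤ u^2 / (1/2) := by
    apply div_le_div_of_nonneg_left (by positivity) (by norm_num) (by linarith)
  calc u^(1+1) / (1 - u) ≤ u^2 / (1/2) := hd
    _ = 2 * u^2 := by ring

lemma log_taylor2 {u : ℝ} (h0 : 0 ≤ u) (h : u ≤ 1/2) :
    |Real.log (1 + u) - u + u^2/2| ≤ 2 * u^3 := by
  have hx : |(-u)| < 1 := by rw [abs_neg, _root_.abs_of_nonneg h0]; linarith
  have H := Real.abs_log_sub_add_sum_range_le hx 2
  have hsum : ∑ i ∈ Finset.range 2, (-u)^(i+1)/((i:ℝ)+1) = -u + u^2/2 := by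
    rw [Finset.sum_range_succ, Finset.sum_range_succ]
    norm_num
  rw [hsum, show (1:ℝ) - -u = 1 + u by ring, abs_neg, _root_.abs_of_nonneg h0] at H
  have h1 : |Real.log (1 + u) - u + u^2/2| = |(-u + u^2/2) + Real.log (1 + u)| := by
    rw [show (-u + u^2/2) + Real.log (1 + u) = Real.log (1 + u) - u + u^2/2 by ring]
  rw [h1]
  refine H.trans ?_
  have hd : u^(2+1) / (1 - u) ≤ u^3 / (1/2) := by
    apply div_le_div_of_nonneg_left (by positivity) (by norm_num) (by linarith)
  calc u^(2+1) / (1 - u) ≤ u^3 / (1/2) := hd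
    _ = 2 * u^3 := by ring


lemma g_bound' {s t : ℝ} (hs : 0 < s) (hs1 : s < 1) (ht : 2 ≤ t)
    (h1 : |Real.log (1 + s/t) - s/t + (s/t)^2/2| ≤ 2*(s/t)^3)
    (h2 : |Real.log (1 + 1/t) - 1/t + (1/t)^2/2| ≤ 2*(1/t)^3) :
    |Real.log (1 + s/t) - s * Real.log (1 + 1/t) - s*(1-s)/(2*t^2)| ≤ 4/t^3 := by
  have ht0 : (0:ℝ) < t := by linarith
  have key : Real.log (1 + s/t) - s * Real.log (1 + 1/t) - s*(1-s)/(2*t^2)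
      = (Real.log (1 + s/t) - s/t + (s/t)^2/2)
        - s * (Real.log (1 + 1/t) - 1/t + (1/t)^2/2) := by
    field_simp
    ring
  rw [key]
  have step1 : |(Real.log (1 + s/t) - s/t + (s/t)^2/2)
        - s * (Real.log (1 + 1/t) - 1/t + (1/t)^2/2)|
      ≤ 2*(s/t)^3 + s * (2*(1/t)^3) := by
    refine (abs_sub _ _).trans ?_
    gcongr
    rw [abs_mul, _root_.abs_of_nonneg hs.le]
    gcongr
  refine step1.trans ?_
  have e : 2*(s/t)^3 + s * (2*(1/t)^3) = (2*s^3 + 2*s)/t^3 := by ring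
  rw [e]
  gcongr
  nlinarith [sq_nonneg s, sq_nonneg (1-s)]

lemma sum_sq_le {t : ℝ} (ht : 2 ≤ t) (n : ℕ) :
    ∑ k ∈ Finset.range n, 1/(t + (k:ℝ))^2 ≤ 1/t + 2/t^2 := by
  have ht0 : (0:ℝ) < t := by linarith
  have key : ∀ k : ℕ, 1/(t + (k:ℝ))^2 ≤ 1/(t + k - 1) - 1/(t + k) := by
    intro k
    have hck : (0:ℝ) ≤ k := Nat.cast_nonneg k
    have hk0 : (0:ℝ) < t + k - 1 := by linarith
    have hk1 : (0:ℝ) < t + k := by linarith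
    calc 1/(t + (k:ℝ))^2 ≤ 1/((t + k - 1)*(t + k)) :=
          one_div_le_one_div_of_le (by positivity) (by nlinarith)
      _ = 1/(t + k - 1) - 1/(t + k) := by
          rw [div_sub_div _ _ (ne_of_gt hk0) (ne_of_gt hk1),
            show (1:ℝ)*(t+(k:ℝ)) - (t+(k:ℝ)-1)*1 = 1 by ring]
  calc ∑ k ∈ Finset.range n, 1/(t + (k:ℝ))^2
      ≤ ∑ k ∈ Finset.range n, (1/(t + (k:ℝ) - 1) - 1/(t + k)) :=
        Finset.sum_le_sum (fun k _ => key k)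
    _ = 1/(t - 1) - 1/(t + (n:ℝ) - 1) := by
        have h := Finset.sum_range_sub' (fun k : ℕ => 1/(t + (k:ℝ) - 1)) n
        simp only [Nat.cast_add, Nat.cast_one, Nat.cast_zero] at h
        rw [show t + (0:ℝ) - 1 = t - 1 by ring] at h
        rw [← h]
        apply Finset.sum_congr rfl
        intro k _
        rw [show t + ((k:ℝ) + 1) - 1 = t + k by ring]
    _ ≤ 1/(t - 1) := by
        have h2 : (0:ℝ) < t + (n:ℝ) - 1 := by
          have : (0:ℝ) ≤ (n:ℝ) := Nat.cast_nonneg n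
          linarith
        have := one_div_nonneg.mpr h2.le
        linarith
    _ ≤ 1/t + 2/t^2 := by
        rw [div_add_div _ _ (ne_of_gt ht0) (by positivity),
          div_le_div_iff₀ (by linarith) (by positivity)]
        nlinarith

lemma sum_sq_ge {t : ℝ} (ht : 2 ≤ t) (n : ℕ) :
    1/t - 1/(t + (n:ℝ)) ≤ ∑ k ∈ Finset.range n, 1/(t + (k:ℝ))^2 := by
  have ht0 : (0:ℝ) < t := by linarith
  have key : ∀ k : ℕ, 1/(t + (k:ℝ)) - 1/(t + k + 1) ≤ 1/(t + (k:ℝ))^2 := by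
    intro k
    have hck : (0:ℝ) ≤ k := Nat.cast_nonneg k
    have hk1 : (0:ℝ) < t + k := by linarith
    calc 1/(t + (k:ℝ)) - 1/(t + k + 1) = 1/((t + k)*(t + k + 1)) := by
          rw [div_sub_div _ _ (ne_of_gt hk1) (by positivity),
            show (1:ℝ)*(t+(k:ℝ)+1) - (t+(k:ℝ))*1 = 1 by ring]
      _ ≤ 1/(t + (k:ℝ))^2 := one_div_le_one_div_of_le (by positivity) (by nlinarith)
  calc 1/t - 1/(t + (n:ℝ))
      = ∑ k ∈ Finset.range n, (1/(t + (k:ℝ)) - 1/(t + k + 1)) := by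
        have h := Finset.sum_range_sub' (fun k : ℕ => 1/(t + (k:ℝ))) n
        simp only [Nat.cast_add, Nat.cast_one, Nat.cast_zero] at h
        rw [show t + (0:ℝ) = t by ring] at h
        rw [← h]
        apply Finset.sum_congr rfl
        intro k _
        ring_nf
    _ ≤ ∑ k ∈ Finset.range n, 1/(t + (k:ℝ))^2 := Finset.sum_le_sum (fun k _ => key k)

lemma sum_cube_le {t : ℝ} (ht : 2 ≤ t) (n : ℕ) :
    ∑ k ∈ Finset.range n, 1/(t + (k:ℝ))^3 ≤ 2/t^2 := by
  have ht0 : (0:ℝ) < t := by linarith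
  have key : ∀ k : ℕ, 1/(t + (k:ℝ))^3 ≤ (1/t) * (1/(t + (k:ℝ))^2) := by
    intro k
    have hck : (0:ℝ) ≤ k := Nat.cast_nonneg k
    have hk1 : (0:ℝ) < t + k := by linarith
    have e : (1/(t+(k:ℝ))) * (1/(t + (k:ℝ))^2) = 1/(t + (k:ℝ))^3 := by
      rw [div_mul_div_comm, one_mul, ← pow_succ']
    rw [← e]
    gcongr
    linarith
  calc ∑ k ∈ Finset.range n, 1/(t + (k:ℝ))^3
      ≤ ∑ k ∈ Finset.range n, (1/t) * (1/(t + (k:ℝ))^2) :=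
        Finset.sum_le_sum (fun k _ => key k)
    _ = (1/t) * ∑ k ∈ Finset.range n, 1/(t + (k:ℝ))^2 := by rw [Finset.mul_sum]
    _ ≤ (1/t) * (1/t + 2/t^2) := by
        have := sum_sq_le ht n
        have h1 : (0:ℝ) ≤ 1/t := by positivity
        exact mul_le_mul_of_nonneg_left this h1
    _ ≤ 2/t^2 := by
        rw [show (1/t) * (1/t + 2/t^2) = (t + 2)/t^3 by field_simp,
          div_le_div_iff₀ (by positivity) (by positivity)]
        nlinarith


lemma g_bound {s t : ℝ} (hs : 0 < s) (hs1 : s < 1) (ht : 2 ≤ t) :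
    |Real.log (1 + s/t) - s * Real.log (1 + 1/t) - s*(1-s)/(2*t^2)| ≤ 4/t^3 := by
  have ht0 : (0:ℝ) < t := by linarith
  have hu1 : (0:ℝ) ≤ s/t := by positivity
  have hu1' : s/t ≤ 1/2 := by rw [div_le_div_iff₀ ht0 (by norm_num)]; nlinarith
  have hu2 : (0:ℝ) ≤ 1/t := by positivity
  have hu2' : 1/t ≤ 1/2 := by rw [div_le_div_iff₀ ht0 (by norm_num)]; linarith
  exact g_bound' hs hs1 ht (log_taylor2 hu1 hu1') (log_taylor2 hu2 hu2')

lemma lf_est {s t : ℝ} (hs : 0 < s) (hs1 : s < 1) (ht : 2 ≤ t) :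
    |lf s t + s*(1-s)/(2*t)| ≤ 9/t^2 := by
  have ht0 : (0:ℝ) < t := by linarith
  set c : ℝ := s*(1-s)/2 with hc
  have hs1' : (0:ℝ) ≤ 1 - s := by linarith
  have hc0 : 0 ≤ c := by rw [hc]; positivity
  have hc8 : c ≤ 1/8 := by rw [hc]; nlinarith [sq_nonneg (s - 1/2)]
  have tele : ∀ n : ℕ, ∑ k ∈ Finset.range n,
      (Real.log (1 + s/(t+(k:ℝ))) - s * Real.log (1 + 1/(t+(k:ℝ))))
      = lf s (t + n) - lf s t := by
    intro n
    have h := Finset.sum_range_sub (fun k : ℕ => lf s (t + (k:ℝ))) n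
    simp only [Nat.cast_add, Nat.cast_one, Nat.cast_zero] at h
    rw [show t + (0:ℝ) = t by ring] at h
    rw [← h]
    apply Finset.sum_congr rfl
    intro k _
    have hk : (0:ℝ) < t + k := by positivity
    rw [show t + ((k:ℝ) + 1) = (t + k) + 1 by ring]
    exact (lf_step hs hk).symm
  have hA : Tendsto (fun n : ℕ => lf s (t + (n:ℝ)) - lf s t) atTop (𝓝 (-lf s t)) := by
    have := (lf_tendsto hs hs1 ht0).sub (tendsto_const_nhds (x := lf s t))
    simpa using this
  set P : ℕ → ℝ := fun n => ∑ k ∈ Finset.range n, 1/(t + (k:ℝ))^2 with hP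
  have hPmono : Monotone P := by
    apply monotone_nat_of_le_succ
    intro n
    rw [hP]
    simp only
    rw [Finset.sum_range_succ]
    have : (0:ℝ) ≤ 1/(t+(n:ℝ))^2 := by positivity
    linarith
  have hPbdd : BddAbove (Set.range P) :=
    ⟨1/t + 2/t^2, by rintro _ ⟨n, rfl⟩; exact sum_sq_le ht n⟩
  have hPlim : Tendsto P atTop (𝓝 (⨆ n, P n)) := tendsto_atTop_ciSup hPmono hPbdd
  set Pl := ⨆ n, P n with hPl
  have hPl_le : Pl ≤ 1/t + 2/t^2 := ciSup_le (fun n => sum_sq_le ht n)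
  have hPl_ge : 1/t ≤ Pl := by
    have h2 : Tendsto (fun n : ℕ => 1/(t + (n:ℝ))) atTop (𝓝 0) :=
      Tendsto.div_atTop tendsto_const_nhds
        (tendsto_atTop_add_const_left _ t tendsto_natCast_atTop_atTop)
    have h1 : Tendsto (fun n : ℕ => 1/t - 1/(t + (n:ℝ))) atTop (𝓝 (1/t)) := by
      have := (tendsto_const_nhds (x := 1/t) (f := atTop (α := ℕ))).sub h2
      simpa using this
    refine le_of_tendsto h1 ?_
    filter_upwards with n
    exact (sum_sq_ge ht n).trans (le_ciSup hPbdd n)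
  have hAB : ∀ n : ℕ, |(lf s (t + (n:ℝ)) - lf s t) - c * P n| ≤ 8/t^2 := by
    intro n
    rw [← tele n, hP]
    simp only
    rw [Finset.mul_sum, ← Finset.sum_sub_distrib]
    refine (Finset.abs_sum_le_sum_abs _ _).trans ?_
    have hterm : ∀ k ∈ Finset.range n,
        |Real.log (1 + s/(t+(k:ℝ))) - s * Real.log (1 + 1/(t+(k:ℝ))) - c * (1/(t+(k:ℝ))^2)|
        ≤ 4/(t+(k:ℝ))^3 := by
      intro k _
      have hck : (0:ℝ) ≤ k := Nat.cast_nonneg k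
      have htk : (2:ℝ) ≤ t + k := by linarith
      have hb := g_bound hs hs1 htk
      rw [show c * (1/(t+(k:ℝ))^2) = s*(1-s)/(2*(t+(k:ℝ))^2) by rw [hc, div_mul_div_comm, mul_one]]
      exact hb
    refine (Finset.sum_le_sum hterm).trans ?_
    calc ∑ k ∈ Finset.range n, 4/(t+(k:ℝ))^3
        = 4 * ∑ k ∈ Finset.range n, 1/(t+(k:ℝ))^3 := by
          rw [Finset.mul_sum]
          apply Finset.sum_congr rfl
          intro k _
          ring
      _ ≤ 4 * (2/t^2) := by
          have := sum_cube_le ht n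
          linarith
      _ = 8/t^2 := by ring
  have hlim2 : Tendsto (fun n : ℕ => |(lf s (t + (n:ℝ)) - lf s t) - c * P n|) atTop
      (𝓝 |(-lf s t) - c * Pl|) := (hA.sub (hPlim.const_mul c)).abs
  have hmainlim : |(-lf s t) - c * Pl| ≤ 8/t^2 :=
    le_of_tendsto hlim2 (Filter.Eventually.of_forall hAB)
  have hfin : |lf s t + c * (1/t)| ≤ 9/t^2 := by
    have e1 : lf s t + c * (1/t) = -(((-lf s t) - c * Pl) + (c * Pl - c * (1/t))) := by ring
    rw [e1, abs_neg]
    refine (abs_add_le _ _).trans ?_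
    have h2 : |c * Pl - c * (1/t)| ≤ 1/t^2 := by
      rw [show c * Pl - c * (1/t) = c * (Pl - 1/t) by ring, abs_mul,
        _root_.abs_of_nonneg hc0]
      have habs : |Pl - 1/t| ≤ 2/t^2 := by
        rw [abs_le]
        constructor <;> linarith
      have hcb : c * |Pl - 1/t| ≤ (1/8) * (2/t^2) :=
        mul_le_mul hc8 habs (abs_nonneg _) (by norm_num)
      refine hcb.trans ?_
      have hx : (0:ℝ) ≤ 1/t^2 := by positivity
      rw [show (1:ℝ)/8 * (2/t^2) = (1/4) * (1/t^2) by ring]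
      linarith
    exact (add_le_add hmainlim h2).trans (by rw [← add_div]; norm_num)
  rw [show s*(1-s)/(2*t) = c * (1/t) by rw [hc, div_mul_div_comm, mul_one]]
  exact hfin



set_option maxHeartbeats 1000000 in
lemma ratio_est {s x : ℝ} (hs : 0 < s) (hs1 : s < 1) (hx : 48 ≤ x) :
    |Real.Gamma (x + 1) / Real.Gamma (x + 1 - s) / x ^ s - (1 + s * (1-s)/(2*x))|
      ≤ 13/x^2 := by
  have hx0 : (0:ℝ) < x := by linarith
  have hs1' : (0:ℝ) ≤ 1 - s := by linarith
  set y : ℝ := x + 1 - s with hy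
  have hxy : x ≤ y := by rw [hy]; linarith
  have hy2 : (2:ℝ) ≤ y := by linarith
  have hy0 : (0:ℝ) < y := by linarith
  set L : ℝ := lf s y + s * Real.log (y/x) with hL
  have hys : y + s = x + 1 := by rw [hy]; ring
  have hΓ1 : 0 < Real.Gamma (x+1) := Real.Gamma_pos_of_pos (by linarith)
  have hΓ2 : 0 < Real.Gamma y := Real.Gamma_pos_of_pos hy0
  have hexp : Real.Gamma (x + 1) / Real.Gamma y / x ^ s = Real.exp L := by
    have hpos : 0 < Real.Gamma (x + 1) / Real.Gamma y / x ^ s := by positivity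
    rw [← Real.exp_log hpos]
    congr 1
    rw [Real.log_div (by positivity) (by positivity),
      Real.log_div (ne_of_gt hΓ1) (ne_of_gt hΓ2), Real.log_rpow hx0, hL]
    unfold lf
    rw [hys, Real.log_div (ne_of_gt hy0) (ne_of_gt hx0)]
    ring
  -- estimates
  have h1 : |lf s y + s*(1-s)/(2*y)| ≤ 9/y^2 := lf_est hs hs1 hy2
  have h1' : (9:ℝ)/y^2 ≤ 9/x^2 := by gcongr
  have hu : (0:ℝ) ≤ (1-s)/x := by positivity
  have hu' : (1-s)/x ≤ 1/2 := by
    rw [div_le_div_iff₀ hx0 (by norm_num)]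
    linarith
  have hyx : y/x = 1 + (1-s)/x := by
    rw [hy]
    field_simp
    ring
  have h2' : |Real.log (y/x) - (1-s)/x| ≤ 2/x^2 := by
    rw [hyx]
    refine (log_taylor1 hu hu').trans ?_
    rw [show 2*((1-s)/x)^2 = (2*(1-s)^2)/x^2 by ring]
    gcongr
    nlinarith
  have hmid : |s*(Real.log (y/x) - (1-s)/x)| ≤ 2/x^2 := by
    rw [abs_mul, _root_.abs_of_nonneg hs.le]
    calc s * |Real.log (y/x) - (1-s)/x| ≤ 1 * (2/x^2) :=
          mul_le_mul hs1.le h2' (abs_nonneg _) (by norm_num)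
      _ = 2/x^2 := one_mul _
  have h3 : |s*(1-s)/x - s*(1-s)/(2*y) - s*(1-s)/(2*x)| ≤ 1/x^2 := by
    have e : s*(1-s)/x - s*(1-s)/(2*y) - s*(1-s)/(2*x) = s*(1-s)*(y-x)/(2*(x*y)) := by
      field_simp
      ring
    rw [e, show y - x = 1 - s by rw [hy]; ring]
    rw [_root_.abs_of_nonneg (by positivity)]
    rw [div_le_div_iff₀ (by positivity) (by positivity)]
    have hA : s*(1-s)^2 ≤ 1 := by nlinarith [sq_nonneg (1-s), sq_nonneg s]
    have hB : x^2 ≤ x*y := by nlinarith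
    nlinarith [mul_le_mul_of_nonneg_right hA (sq_nonneg x), mul_pos hx0 hy0]
  have hdec : L - s*(1-s)/(2*x)
      = (lf s y + s*(1-s)/(2*y)) + s*(Real.log (y/x) - (1-s)/x)
        + (s*(1-s)/x - s*(1-s)/(2*y) - s*(1-s)/(2*x)) := by
    rw [hL]; ring
  have hLd : |L - s*(1-s)/(2*x)| ≤ 12/x^2 := by
    rw [hdec]
    refine (abs_add_three _ _ _).trans ?_
    have : (9:ℝ)/x^2 + 2/x^2 + 1/x^2 = 12/x^2 := by
      rw [← add_div, ← add_div]
      norm_num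
    linarith [h1.trans h1', hmid, h3]
  have hL1 : |L| ≤ 1/x := by
    have h12 : (12:ℝ)/x^2 ≤ (1/4)*(1/x) := by
      rw [show (1:ℝ)/4*(1/x) = 1/(4*x) by ring,
        div_le_div_iff₀ (by positivity) (by positivity)]
      nlinarith [mul_nonneg hx0.le (by linarith : (0:ℝ) ≤ x - 48)]
    have hcp : s*(1-s)/(2*x) ≤ (1/8)*(1/x) := by
      rw [show s*(1-s)/(2*x) = (s*(1-s)/2)*(1/x) by ring]
      apply mul_le_mul_of_nonneg_right _ (by positivity)
      nlinarith [sq_nonneg (s-1/2)]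
    have habs := abs_add_le (L - s*(1-s)/(2*x)) (s*(1-s)/(2*x))
    rw [show (L - s*(1-s)/(2*x)) + s*(1-s)/(2*x) = L from by ring] at habs
    have hcabs : |s*(1-s)/(2*x)| = s*(1-s)/(2*x) := _root_.abs_of_nonneg (by positivity)
    rw [hcabs] at habs
    have hix : (0:ℝ) ≤ 1/x := by positivity
    linarith
  have hx1 : 1/x ≤ 1 := by
    rw [div_le_one hx0]; linarith
  have hL2 : L^2 ≤ 1/x^2 := by
    rw [← _root_.sq_abs L]
    calc |L|^2 ≤ (1/x)^2 := pow_le_pow_left₀ (abs_nonneg L) hL1 2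
      _ = 1/x^2 := by rw [div_pow, one_pow]
  have hexp2 : |Real.exp L - 1 - L| ≤ L^2 := Real.abs_exp_sub_one_sub_id_le (hL1.trans hx1)
  rw [hexp, show Real.exp L - (1 + s*(1-s)/(2*x))
      = (Real.exp L - 1 - L) + (L - s*(1-s)/(2*x)) by ring]
  refine (abs_add_le _ _).trans ?_
  refine (add_le_add (hexp2.trans hL2) hLd).trans ?_
  rw [← add_div]
  norm_num

end Stmt16Aux

theorem stmt16 (ρ : ℝ) (hρ : 1 < ρ) :
    ∃ C : ℝ, 0 < C ∧ ∃ N : ℕ, ∀ n ≥ N,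
      |Rn ρ n / ((n : ℝ) / ρ) ^ (1 / ρ : ℝ) - (1 + (ρ - 1) / (2 * ρ * n))| ≤ C / (n : ℝ) ^ 2 := by
  have hρ0 : (0:ℝ) < ρ := by linarith
  have hρ' : ρ ≠ 0 := ne_of_gt hρ0
  have hs : (0:ℝ) < 1/ρ := by positivity
  have hs1 : 1/ρ < 1 := by rw [div_lt_one hρ0]; linarith
  refine ⟨13 * ρ^2, by positivity, ⌈(48:ℝ) * ρ⌉₊, fun n hn => ?_⟩
  have hnR : (48:ℝ) * ρ ≤ (n:ℝ) := (Nat.le_ceil _).trans (Nat.cast_le.mpr hn)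
  have hn0 : (0:ℝ) < (n:ℝ) := lt_of_lt_of_le (by positivity) hnR
  have hn' : (n:ℝ) ≠ 0 := ne_of_gt hn0
  have hx : (48:ℝ) ≤ (n:ℝ)/ρ := by rw [le_div_iff₀ hρ0]; linarith
  have key := Stmt16Aux.ratio_est hs hs1 hx
  have hRn : Rn ρ n = Real.Gamma ((n:ℝ)/ρ + 1) / Real.Gamma ((n:ℝ)/ρ + 1 - 1/ρ) := by
    unfold Rn
    rw [show (1:ℝ) + (n:ℝ)/ρ = (n:ℝ)/ρ + 1 by ring,
      show (1:ℝ) + ((n:ℝ) - 1)/ρ = (n:ℝ)/ρ + 1 - 1/ρ by rw [sub_div]; ring]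
  rw [hRn]
  have e1 : (1:ℝ) + (1/ρ)*(1-1/ρ)/(2*((n:ℝ)/ρ)) = 1 + (ρ-1)/(2*ρ*(n:ℝ)) := by
    field_simp
  have e2 : (13:ℝ)/((n:ℝ)/ρ)^2 = 13*ρ^2/(n:ℝ)^2 := by
    field_simp
  rw [← e1, ← e2]
  exact key
end
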